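/- arXiv:1602.00145 — 10 statements merged into one kernel-verified Lean document; each statement's English description precedes it below -/
import Mathlib

section
/- Let n ≥ 1, let a, h ∈ ℂⁿ with h ≠ 0, and let c ≥ 0 be real. Then the function w ↦ |wᴴh|² / (c·|wᴴa|² + 1) attains its maximum over the unit sphere {w ∈ ℂⁿ : ‖w‖ = 1}, and the maximum value equals ‖h‖² − c·|aᴴh|² / (1 + c·‖a‖²). -/
open Matrix
open scoped InnerProductSpace ComplexConjugate

private noncomputable def Tmap (n : ℕ) (a : EuclideanSpace ℂ (Fin n)) (c : ℝ)
    (z : EuclideanSpace ℂ (Fin n)) : WithLp 2 (EuclideanSpace ℂ (Fin n) × ℂ) :=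
  (WithLp.equiv 2 _).symm (z, (Real.sqrt c : ℂ) * ⟪a, z⟫_ℂ)

private lemma Tinner (n : ℕ) (a : EuclideanSpace ℂ (Fin n)) (c : ℝ) (hc : 0 ≤ c)
    (x y : EuclideanSpace ℂ (Fin n)) :
    ⟪Tmap n a c x, Tmap n a c y⟫_ℂ = ⟪x, y⟫_ℂ + (c : ℂ) * ⟪x, a⟫_ℂ * ⟪a, y⟫_ℂ := by
  have hr : (Real.sqrt c : ℂ) * (Real.sqrt c : ℂ) = (c : ℂ) := by
    rw [← Complex.ofReal_mul, Real.mul_self_sqrt hc]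
  simp only [Tmap, WithLp.prod_inner_apply, WithLp.equiv_symm_apply, WithLp.ofLp_toLp,
    RCLike.inner_apply, _root_.map_mul, Complex.conj_ofReal, inner_conj_symm]
  linear_combination (⟪x, a⟫_ℂ * ⟪a, y⟫_ℂ) * hr

private lemma Tnormsq (n : ℕ) (a : EuclideanSpace ℂ (Fin n)) (c : ℝ) (hc : 0 ≤ c)
    (x : EuclideanSpace ℂ (Fin n)) :
    ‖Tmap n a c x‖ ^ 2 = ‖x‖ ^ 2 + c * ‖⟪a, x⟫_ℂ‖ ^ 2 := by
  have h1 : (⟪Tmap n a c x, Tmap n a c x⟫_ℂ) = ((‖x‖ ^ 2 + c * ‖⟪a, x⟫_ℂ‖ ^ 2 : ℝ) : ℂ) := by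
    rw [Tinner n a c hc x x]
    have h2 : ⟪x, a⟫_ℂ * ⟪a, x⟫_ℂ = (‖⟪a, x⟫_ℂ‖ ^ 2 : ℝ) := by
      rw [← inner_conj_symm (𝕜 := ℂ) x a]
      have := RCLike.conj_mul (K := ℂ) (⟪a, x⟫_ℂ)
      norm_cast at this ⊢
    have h3 : ⟪x, x⟫_ℂ = ((‖x‖ ^ 2 : ℝ) : ℂ) := by
      rw [inner_self_eq_norm_sq_to_K]; norm_cast
    push_cast at h2 h3 ⊢
    linear_combination h3 + (c : ℂ) * h2
  have := norm_sq_eq_re_inner (𝕜 := ℂ) (Tmap n a c x)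
  rw [h1] at this
  rw [this]; exact Complex.ofReal_re _

private lemma aux_cs (n : ℕ) (a : EuclideanSpace ℂ (Fin n)) (c : ℝ) (hc : 0 ≤ c)
    (x y : EuclideanSpace ℂ (Fin n)) :
    ‖⟪x, y⟫_ℂ + (c : ℂ) * ⟪x, a⟫_ℂ * ⟪a, y⟫_ℂ‖ ^ 2
      ≤ (‖x‖ ^ 2 + c * ‖⟪a, x⟫_ℂ‖ ^ 2) * (‖y‖ ^ 2 + c * ‖⟪a, y⟫_ℂ‖ ^ 2) := by
  have := norm_inner_le_norm (𝕜 := ℂ) (Tmap n a c x) (Tmap n a c y)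
  rw [Tinner n a c hc x y] at this
  have h2 := mul_le_mul this this (norm_nonneg _) (by positivity)
  calc ‖⟪x, y⟫_ℂ + (c : ℂ) * ⟪x, a⟫_ℂ * ⟪a, y⟫_ℂ‖ ^ 2
      = ‖⟪x, y⟫_ℂ + (c : ℂ) * ⟪x, a⟫_ℂ * ⟪a, y⟫_ℂ‖ * ‖⟪x, y⟫_ℂ + (c : ℂ) * ⟪x, a⟫_ℂ * ⟪a, y⟫_ℂ‖ := sq _
    _ ≤ ‖Tmap n a c x‖ * ‖Tmap n a c y‖ * (‖Tmap n a c x‖ * ‖Tmap n a c y‖) := h2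
    _ = ‖Tmap n a c x‖ ^ 2 * ‖Tmap n a c y‖ ^ 2 := by ring
    _ = _ := by rw [Tnormsq n a c hc x, Tnormsq n a c hc y]


private lemma inner_self_ofReal {n : ℕ} (x : EuclideanSpace ℂ (Fin n)) :
    ⟪x, x⟫_ℂ = ((‖x‖ ^ 2 : ℝ) : ℂ) := by
  rw [inner_self_eq_norm_sq_to_K]; norm_cast

private lemma conj_mul_ofReal (z : ℂ) :
    (starRingEnd ℂ) z * z = ((‖z‖ ^ 2 : ℝ) : ℂ) := by
  have := RCLike.conj_mul (K := ℂ) z; norm_cast at this ⊢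

/-- The function `w ↦ |wᴴh|² / (c·|wᴴa|² + 1)` attains its maximum over the unit
sphere, and the maximum value equals `‖h‖² − c·|aᴴh|²/(1 + c·‖a‖²)`. -/
theorem stmt_2 (n : ℕ) (hn : 1 ≤ n) (a h : EuclideanSpace ℂ (Fin n)) (hh : h ≠ 0)
    (c : ℝ) (hc : 0 ≤ c) :
    ∃ wstar : EuclideanSpace ℂ (Fin n), ‖wstar‖ = 1 ∧
      (∀ w : EuclideanSpace ℂ (Fin n), ‖w‖ = 1 →
        ‖star (w : Fin n → ℂ) ⬝ᵥ (h : Fin n → ℂ)‖ ^ 2 /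
            (c * ‖star (w : Fin n → ℂ) ⬝ᵥ (a : Fin n → ℂ)‖ ^ 2 + 1) ≤
          ‖star (wstar : Fin n → ℂ) ⬝ᵥ (h : Fin n → ℂ)‖ ^ 2 /
            (c * ‖star (wstar : Fin n → ℂ) ⬝ᵥ (a : Fin n → ℂ)‖ ^ 2 + 1)) ∧
      ‖star (wstar : Fin n → ℂ) ⬝ᵥ (h : Fin n → ℂ)‖ ^ 2 /
          (c * ‖star (wstar : Fin n → ℂ) ⬝ᵥ (a : Fin n → ℂ)‖ ^ 2 + 1) =
        ‖h‖ ^ 2 - c * ‖star (a : Fin n → ℂ) ⬝ᵥ (h : Fin n → ℂ)‖ ^ 2 / (1 + c * ‖a‖ ^ 2) := by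
  have hd : ∀ x y : EuclideanSpace ℂ (Fin n),
      star (x : Fin n → ℂ) ⬝ᵥ (y : Fin n → ℂ) = ⟪x, y⟫_ℂ := by
    intro x y
    simp [dotProduct, PiLp.inner_apply, RCLike.inner_apply, mul_comm]
  set K : ℝ := 1 + c * ‖a‖ ^ 2 with hKdef
  have hK : 0 < K := by positivity
  have hKC : (K : ℂ) ≠ 0 := by
    simp only [ne_eq, Complex.ofReal_eq_zero]; exact ne_of_gt hK
  set α : ℂ := ((c / K : ℝ) : ℂ) * ⟪a, h⟫_ℂ with hα
  set v : EuclideanSpace ℂ (Fin n) := h - α • a with hv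
  have hav : ⟪a, v⟫_ℂ = ((1 / K : ℝ) : ℂ) * ⟪a, h⟫_ℂ := by
    have hKC' : (1 : ℂ) + (c : ℂ) * (‖a‖ : ℂ) ^ 2 ≠ 0 := by
      rw [hKdef] at hKC; push_cast at hKC; exact hKC
    rw [hv, inner_sub_right, inner_smul_right, inner_self_ofReal, hα, hKdef]
    push_cast
    field_simp
    ring
  have hcav : (c : ℂ) * ⟪a, v⟫_ℂ = α := by
    rw [hav, hα]
    push_cast
    field_simp
  have hQ : ∀ w : EuclideanSpace ℂ (Fin n),
      ⟪w, v⟫_ℂ + (c : ℂ) * ⟪w, a⟫_ℂ * ⟪a, v⟫_ℂ = ⟪w, h⟫_ℂ := by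
    intro w
    have h1 : ⟪w, v⟫_ℂ = ⟪w, h⟫_ℂ - α * ⟪w, a⟫_ℂ := by
      rw [hv, inner_sub_right, inner_smul_right]
    rw [h1]
    linear_combination ⟪w, a⟫_ℂ * hcav
  set M : ℝ := ‖h‖ ^ 2 - c * ‖⟪a, h⟫_ℂ‖ ^ 2 / K with hMdef
  have hMv : ⟪v, h⟫_ℂ = ((M : ℝ) : ℂ) := by
    have h1 : ⟪v, h⟫_ℂ = ⟪h, h⟫_ℂ - (starRingEnd ℂ) α * ⟪a, h⟫_ℂ := by
      rw [hv, inner_sub_left, inner_smul_left]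
    have h2 := conj_mul_ofReal ⟪a, h⟫_ℂ
    rw [h1, inner_self_ofReal, hα, hMdef]
    simp only [_root_.map_mul, Complex.conj_ofReal]
    push_cast at h2 ⊢
    linear_combination (-(c : ℂ) / (K : ℂ)) * h2
  have hh2 : 0 < ‖h‖ := norm_pos_iff.mpr hh
  have hXX : ‖⟪a, h⟫_ℂ‖ * ‖⟪a, h⟫_ℂ‖ ≤ (‖a‖ * ‖h‖) * (‖a‖ * ‖h‖) :=
    mul_self_le_mul_self (norm_nonneg _) (norm_inner_le_norm a h)
  have hMpos : 0 < M := by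
    rw [hMdef, sub_pos, div_lt_iff₀ hK, hKdef]
    nlinarith [hXX, hc, hh2, mul_nonneg hc (sq_nonneg ‖a‖)]
  have hvQ : ‖v‖ ^ 2 + c * ‖⟪a, v⟫_ℂ‖ ^ 2 = M := by
    have h1 := hQ v
    rw [hMv] at h1
    have h2 : ⟪v, a⟫_ℂ * ⟪a, v⟫_ℂ = ((‖⟪a, v⟫_ℂ‖ ^ 2 : ℝ) : ℂ) := by
      rw [← inner_conj_symm (𝕜 := ℂ) v a]
      exact conj_mul_ofReal _
    rw [inner_self_ofReal] at h1
    have h3 : ((‖v‖ ^ 2 + c * ‖⟪a, v⟫_ℂ‖ ^ 2 : ℝ) : ℂ) = ((M : ℝ) : ℂ) := by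
      push_cast at h1 h2 ⊢
      linear_combination h1 - (c : ℂ) * h2
    exact_mod_cast h3
  have hv0 : v ≠ 0 := by
    intro h0
    rw [h0, inner_zero_left] at hMv
    have : (M : ℝ) = 0 := by exact_mod_cast hMv.symm
    exact absurd this (ne_of_gt hMpos)
  have hnv : 0 < ‖v‖ := norm_pos_iff.mpr hv0
  have hnv' : (‖v‖ : ℝ) ≠ 0 := ne_of_gt hnv
  have hwsh : ⟪((‖v‖⁻¹ : ℝ) : ℂ) • v, h⟫_ℂ = ((‖v‖⁻¹ * M : ℝ) : ℂ) := by
    rw [inner_smul_left, Complex.conj_ofReal, hMv]; push_cast; ring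
  have hwsa : ‖⟪((‖v‖⁻¹ : ℝ) : ℂ) • v, a⟫_ℂ‖ = ‖v‖⁻¹ * ‖⟪a, v⟫_ℂ‖ := by
    rw [inner_smul_left, Complex.conj_ofReal, norm_mul]
    rw [← inner_conj_symm (𝕜 := ℂ) v a, RCLike.norm_conj]
    simp [abs_of_pos (inv_pos.mpr hnv)]
  set x : ℝ := ‖⟪a, v⟫_ℂ‖ with hxDef
  have hval : ‖⟪((‖v‖⁻¹ : ℝ) : ℂ) • v, h⟫_ℂ‖ ^ 2 /
      (c * ‖⟪((‖v‖⁻¹ : ℝ) : ℂ) • v, a⟫_ℂ‖ ^ 2 + 1) = M := by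
    rw [hwsh, hwsa]
    have hnorm : ‖((‖v‖⁻¹ * M : ℝ) : ℂ)‖ = ‖v‖⁻¹ * M := by
      rw [Complex.norm_real]
      exact abs_of_pos (mul_pos (inv_pos.mpr hnv) hMpos)
    rw [hnorm]
    have hden : c * (‖v‖⁻¹ * x) ^ 2 + 1 = M / ‖v‖ ^ 2 := by
      rw [eq_div_iff (by positivity)]
      have : c * x ^ 2 = M - ‖v‖ ^ 2 := by linarith [hvQ]
      field_simp
      linarith [this]
    rw [hden, div_div_eq_mul_div, div_eq_iff (ne_of_gt hMpos)]
    field_simp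
  refine ⟨((‖v‖⁻¹ : ℝ) : ℂ) • v, ?_, ?_, ?_⟩
  · rw [norm_smul]
    simp [abs_of_pos (inv_pos.mpr hnv), hnv']
  · intro w hw
    simp only [hd]
    rw [hval]
    have hD : (0 : ℝ) < c * ‖⟪w, a⟫_ℂ‖ ^ 2 + 1 := by positivity
    rw [div_le_iff₀ hD]
    have hcs := aux_cs n a c hc w v
    rw [hQ w] at hcs
    have hsym : ‖⟪a, w⟫_ℂ‖ = ‖⟪w, a⟫_ℂ‖ := by
      rw [← inner_conj_symm (𝕜 := ℂ) w a, RCLike.norm_conj]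
    rw [hw, hsym] at hcs
    calc ‖⟪w, h⟫_ℂ‖ ^ 2
        ≤ (1 ^ 2 + c * ‖⟪w, a⟫_ℂ‖ ^ 2) * (‖v‖ ^ 2 + c * x ^ 2) := hcs
      _ = M * (c * ‖⟪w, a⟫_ℂ‖ ^ 2 + 1) := by rw [hvQ]; ring
  · simp only [hd]
    rw [hval]
end

section
/- Let n ≥ 1, let W be an n×n complex positive semidefinite matrix with trace equal to 1, and let x ∈ ℂⁿ satisfy xᴴWx = 0. Then for every g ∈ ℂⁿ there exists a unit vector u ∈ ℂⁿ such that xᴴu = 0 and gᴴWg ≤ |gᴴu|². -/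
open Matrix ComplexOrder

lemma dot_sum (n : ℕ) (y : Fin n → ℂ) (f : Fin n → Fin n → ℂ) :
    star y ⬝ᵥ (∑ i, f i) = ∑ i, star y ⬝ᵥ f i := by
  simp only [dotProduct, Finset.sum_apply, Finset.mul_sum]
  exact Finset.sum_comm

lemma quad_form_eq (n : ℕ) (W : Matrix (Fin n) (Fin n) ℂ) (he : W.IsHermitian)
    (y : Fin n → ℂ) :
    star y ⬝ᵥ W.mulVec y =
      ((∑ i, he.eigenvalues i * ‖star y ⬝ᵥ ⇑(he.eigenvectorBasis i)‖ ^ 2 : ℝ) : ℂ) := by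
  set b := he.eigenvectorBasis with hb
  set c : Fin n → ℂ := fun i => b.repr (WithLp.toLp 2 y) i with hc
  have hy : (WithLp.toLp 2 y : EuclideanSpace ℂ (Fin n)) = ∑ i, c i • b i := (b.sum_repr _).symm
  have hy' : y = ∑ i, c i • ⇑(b i) := by simpa using congrArg WithLp.ofLp hy
  have h1 : W.mulVec y = ∑ i, c i • ((he.eigenvalues i : ℂ) • ⇑(b i)) := by
    conv_lhs => rw [hy']
    rw [← Matrix.mulVecLin_apply, map_sum]
    refine Finset.sum_congr rfl fun i _ => ?_
    rw [_root_.map_smul, Matrix.mulVecLin_apply, he.mulVec_eigenvectorBasis,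
      RCLike.real_smul_eq_coe_smul (K := ℂ)]
    rfl
  rw [h1, dot_sum]
  push_cast
  refine Finset.sum_congr rfl fun i _ => ?_
  have hci : c i = (starRingEnd ℂ) (star y ⬝ᵥ ⇑(b i)) := by
    show b.repr (WithLp.toLp 2 y) i = _
    rw [b.repr_apply_apply, EuclideanSpace.inner_eq_star_dotProduct]
    simp [dotProduct, map_sum, mul_comm]
  have : star y ⬝ᵥ (c i • (he.eigenvalues i : ℂ) • ⇑(b i))
      = c i * (he.eigenvalues i : ℂ) * (star y ⬝ᵥ ⇑(b i)) := by
    simp [dotProduct_smul, smul_smul, mul_assoc]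
  rw [this, hci, ← Complex.mul_conj' (star y ⬝ᵥ ⇑(b i))]
  ring

/-- If `W` is positive semidefinite with unit trace and `xᴴWx = 0`, then for
every `g` there is a unit vector `u` orthogonal to `x` with `gᴴWg ≤ |gᴴu|²`. -/
theorem stmt_6 (n : ℕ) (hn : 1 ≤ n) (W : Matrix (Fin n) (Fin n) ℂ)
    (hW : W.PosSemidef) (htr : W.trace = 1) (x : Fin n → ℂ)
    (hx : star x ⬝ᵥ W.mulVec x = 0) :
    ∀ g : Fin n → ℂ, ∃ u : EuclideanSpace ℂ (Fin n), ‖u‖ = 1 ∧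
      star x ⬝ᵥ (u : Fin n → ℂ) = 0 ∧
      (star g ⬝ᵥ W.mulVec g).re ≤ ‖star g ⬝ᵥ (u : Fin n → ℂ)‖ ^ 2 := by
  intro g
  set he := hW.1 with hhe
  set b := he.eigenvectorBasis with hb
  set μ := he.eigenvalues with hμ
  have hμ0 : ∀ i, 0 ≤ μ i := hW.eigenvalues_nonneg
  -- sum of eigenvalues equals trace = 1
  have htr' : ∑ i, μ i = 1 := by
    have h := he.spectral_theorem
    have : W.trace = (Matrix.diagonal (RCLike.ofReal ∘ μ)).trace := by
      conv_lhs => rw [h]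
      rw [Unitary.conjStarAlgAut_apply]
      rw [Matrix.trace_mul_comm, ← mul_assoc]
      rw [Matrix.mem_unitaryGroup_iff'.mp (he.eigenvectorUnitary).2, one_mul]
    rw [htr, Matrix.trace_diagonal] at this
    have := congrArg Complex.re this.symm
    simpa using this
  -- real quadratic form
  have hquad : ∀ y : Fin n → ℂ, (star y ⬝ᵥ W.mulVec y).re
      = ∑ i, μ i * ‖star y ⬝ᵥ ⇑(b i)‖ ^ 2 := by
    intro y
    rw [quad_form_eq n W he y, Complex.ofReal_re]
  -- orthogonality: for i with μ i ≠ 0, x ⟂ b i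
  have hxortho : ∀ i, μ i ≠ 0 → star x ⬝ᵥ ⇑(b i) = 0 := by
    intro i hi
    have h0 : ∑ j, μ j * ‖star x ⬝ᵥ ⇑(b j)‖ ^ 2 = 0 := by
      rw [← hquad x, hx]; simp
    have hterm : ∀ j ∈ Finset.univ, 0 ≤ μ j * ‖star x ⬝ᵥ ⇑(b j)‖ ^ 2 := fun j _ =>
      mul_nonneg (hμ0 j) (by positivity)
    have := (Finset.sum_eq_zero_iff_of_nonneg hterm).mp h0 i (Finset.mem_univ i)
    rcases mul_eq_zero.mp this with h | h
    · exact absurd h hi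
    · have : ‖star x ⬝ᵥ ⇑(b i)‖ = 0 := by
        have := sq_eq_zero_iff.mp h
        exact this
      exact norm_eq_zero.mp this
  -- choose i₀ maximizing ‖star g ⬝ᵥ b i‖² over support of μ
  have hsupp : (Finset.univ.filter (fun i => μ i ≠ 0)).Nonempty := by
    by_contra h
    rw [Finset.not_nonempty_iff_eq_empty] at h
    have : ∑ i, μ i = 0 := by
      refine Finset.sum_eq_zero fun i _ => ?_
      by_contra hi
      have : i ∈ Finset.univ.filter (fun i => μ i ≠ 0) := by simp [hi]
      simp [h] at this
    rw [htr'] at this; norm_num at this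
  obtain ⟨i₀, hi₀mem, hi₀max⟩ := Finset.exists_max_image
    (Finset.univ.filter (fun i => μ i ≠ 0)) (fun i => ‖star g ⬝ᵥ ⇑(b i)‖ ^ 2) hsupp
  have hi₀ : μ i₀ ≠ 0 := (Finset.mem_filter.mp hi₀mem).2
  refine ⟨b i₀, b.orthonormal.1 i₀, hxortho i₀ hi₀, ?_⟩
  rw [hquad g]
  calc ∑ i, μ i * ‖star g ⬝ᵥ ⇑(b i)‖ ^ 2
      = ∑ i ∈ Finset.univ.filter (fun i => μ i ≠ 0), μ i * ‖star g ⬝ᵥ ⇑(b i)‖ ^ 2 := by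
        rw [Finset.sum_filter_of_ne]
        intro i _ h hμi
        exact h (by simp [hμi])
    _ ≤ ∑ i ∈ Finset.univ.filter (fun i => μ i ≠ 0), μ i * ‖star g ⬝ᵥ ⇑(b i₀)‖ ^ 2 := by
        refine Finset.sum_le_sum fun i hi => ?_
        exact mul_le_mul_of_nonneg_left (hi₀max i hi) (hμ0 i)
    _ ≤ ∑ i, μ i * ‖star g ⬝ᵥ ⇑(b i₀)‖ ^ 2 := by
        refine Finset.sum_le_sum_of_subset_of_nonneg (Finset.filter_subset _ _) ?_
        intro i _ _
        exact mul_nonneg (hμ0 i) (by positivity)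
    _ = ‖star g ⬝ᵥ ⇑(b i₀)‖ ^ 2 := by
        rw [← Finset.sum_mul, htr', one_mul]
    _ = ‖star g ⬝ᵥ ((b i₀ : EuclideanSpace ℂ (Fin n)) : Fin n → ℂ)‖ ^ 2 := rfl
end

section
/- Let a > 0. The function g_a : [0,1) → ℝ defined by g_a(α) = (1−α)·log₂(1 + aα/(1−α)) is strictly concave on the interval [0,1). -/
open Real Set Filter

/-- For `a > 0`, the throughput function `α ↦ (1−α)·log₂(1 + aα/(1−α))` is
strictly concave on `[0,1)`. -/
theorem stmt_9 (a : ℝ) (ha : 0 < a) :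
    StrictConcaveOn ℝ (Set.Ico (0 : ℝ) 1)
      (fun α => (1 - α) * Real.logb 2 (1 + a * α / (1 - α))) := by
  set c : ℝ := a - 1 with hc
  set U : Set ℝ := {x : ℝ | 0 < 1 - x} ∩ {x : ℝ | 0 < 1 + c * x} with hU
  have hUopen : IsOpen U := by
    apply IsOpen.inter
    · exact isOpen_lt (by continuity) (by continuity)
    · exact isOpen_lt (by continuity) (by continuity)
  have hsub : Set.Ico (0:ℝ) 1 ⊆ U := by
    intro x hx
    refine ⟨?_, ?_⟩
    · show (0:ℝ) < 1 - x; linarith [hx.2]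
    · show (0:ℝ) < 1 + c * x; nlinarith [hx.1, hx.2]
  set f : ℝ → ℝ := fun α => (1 - α) * Real.logb 2 (1 + a * α / (1 - α)) with hf
  set G : ℝ → ℝ := fun x =>
    ((1 - x) * Real.log (1 + c * x) - (1 - x) * Real.log (1 - x)) / Real.log 2 with hG
  set G' : ℝ → ℝ := fun x =>
    (-Real.log (1 + c * x) + c * (1 - x) / (1 + c * x) + Real.log (1 - x) + 1) / Real.log 2
    with hG'
  set G'' : ℝ → ℝ := fun x =>
    (-(c / (1 + c * x)) + c * (-a) / (1 + c * x) ^ 2 - 1 / (1 - x)) / Real.log 2 with hG''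
  have hfeq : Set.EqOn f G U := by
    intro x hx
    obtain ⟨hv, hu⟩ := hx
    have hv : (0:ℝ) < 1 - x := hv
    have hu : (0:ℝ) < 1 + c * x := hu
    have harg : 1 + a * x / (1 - x) = (1 + c * x) / (1 - x) := by
      field_simp; ring
    show (1 - x) * Real.logb 2 (1 + a * x / (1 - x)) = G x
    rw [harg, Real.logb, Real.log_div (ne_of_gt hu) (ne_of_gt hv), hG]
    ring
  have hDG : ∀ x ∈ U, HasDerivAt G (G' x) x := by
    intro x hx
    obtain ⟨hv, hu⟩ := hx
    have hv : (0:ℝ) < 1 - x := hv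
    have hu : (0:ℝ) < 1 + c * x := hu
    have h1 : HasDerivAt (fun y : ℝ => 1 - y) (-1) x := by
      simpa using (hasDerivAt_id x).const_sub 1
    have h2 : HasDerivAt (fun y : ℝ => 1 + c * y) c x := by
      simpa using ((hasDerivAt_id x).const_mul c).const_add 1
    have h3 : HasDerivAt (fun y : ℝ => Real.log (1 + c * y)) (c / (1 + c * x)) x :=
      h2.log (ne_of_gt hu)
    have h4 : HasDerivAt (fun y : ℝ => Real.log (1 - y)) (-1 / (1 - x)) x := by
      simpa using h1.log (ne_of_gt hv)
    have h5 := ((h1.mul h3).sub (h1.mul h4)).div_const (Real.log 2)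
    convert h5 using 1
    · rfl
    · rfl
    · rfl
    rw [hG']
    field_simp
    ring
  have hDG' : ∀ x ∈ U, HasDerivAt G' (G'' x) x := by
    intro x hx
    obtain ⟨hv, hu⟩ := hx
    have hv : (0:ℝ) < 1 - x := hv
    have hu : (0:ℝ) < 1 + c * x := hu
    have h1 : HasDerivAt (fun y : ℝ => 1 - y) (-1) x := by
      simpa using (hasDerivAt_id x).const_sub 1
    have h2 : HasDerivAt (fun y : ℝ => 1 + c * y) c x := by
      simpa using ((hasDerivAt_id x).const_mul c).const_add 1
    have h3 : HasDerivAt (fun y : ℝ => Real.log (1 + c * y)) (c / (1 + c * x)) x :=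
      h2.log (ne_of_gt hu)
    have h4 : HasDerivAt (fun y : ℝ => Real.log (1 - y)) (-1 / (1 - x)) x := by
      simpa using h1.log (ne_of_gt hv)
    have hdiv : HasDerivAt (fun y : ℝ => c * (1 - y) / (1 + c * y))
        ((c * (-1) * (1 + c * x) - c * (1 - x) * c) / (1 + c * x) ^ 2) x :=
      (h1.const_mul c).div h2 (ne_of_gt hu)
    have h5 := ((((h3.neg.add hdiv).add h4).add_const 1).div_const (Real.log 2))
    convert h5 using 1
    · rfl
    · rfl
    · rfl
    rw [hG'']
    have hune : (1 + c * x) ≠ 0 := ne_of_gt hu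
    field_simp
    ring
  -- first derivative of f agrees with G' on U
  have hderiv : ∀ x ∈ U, deriv f x = G' x := by
    intro x hx
    have hev : f =ᶠ[nhds x] G :=
      Filter.eventuallyEq_of_mem (hUopen.mem_nhds hx) hfeq
    rw [hev.deriv_eq]
    exact (hDG x hx).deriv
  apply strictConcaveOn_of_deriv2_neg (convex_Ico (0:ℝ) 1)
  · exact ContinuousOn.congr
      (fun x hx => ((hDG x (hsub hx)).continuousAt).continuousWithinAt)
      (fun x hx => hfeq (hsub hx))
  · intro x hx
    rw [interior_Ico] at hx
    have hxU : x ∈ U := hsub ⟨le_of_lt hx.1, hx.2⟩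
    have hv : (0:ℝ) < 1 - x := hxU.1
    have hu : (0:ℝ) < 1 + c * x := hxU.2
    have hev' : deriv f =ᶠ[nhds x] G' :=
      Filter.eventuallyEq_of_mem (hUopen.mem_nhds hxU) hderiv
    have h2d : deriv (deriv f) x = G'' x := by
      rw [hev'.deriv_eq]
      exact (hDG' x hxU).deriv
    show deriv (deriv f) x < 0
    rw [h2d, hG'']
    show (-(c / (1 + c * x)) + c * (-a) / (1 + c * x) ^ 2 - 1 / (1 - x)) / Real.log 2 < 0
    have hnum : -(c / (1 + c * x)) + c * (-a) / (1 + c * x) ^ 2 - 1 / (1 - x)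
        = -(a ^ 2) / ((1 - x) * (1 + c * x) ^ 2) := by
      field_simp
      ring
    rw [hnum]
    apply div_neg_of_neg_of_pos
    · apply div_neg_of_neg_of_pos
      · nlinarith
      · positivity
    · exact Real.log_pos (by norm_num)
end

section
/- Let a > 0 and define g_a : [0,1) → ℝ by g_a(α) = (1−α)·log₂(1 + aα/(1−α)). Then there exists a unique α* ∈ (0,1) satisfying ln(1 + aα*/(1−α*)) = a/(1−α* + aα*) (ln the natural logarithm), and g_a attains its maximum over [0,1) at α*. -/
open Real Set

noncomputable def Hf (a : ℝ) (x : ℝ) : ℝ :=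
  a / (1 - x + a * x) - (Real.log (1 - x + a * x) - Real.log (1 - x))

noncomputable def Ff (a : ℝ) (x : ℝ) : ℝ :=
  (1 - x) * (Real.log (1 - x + a * x) - Real.log (1 - x))

lemma Dpos {a x : ℝ} (ha : 0 < a) (hx0 : 0 ≤ x) (hx1 : x < 1) : 0 < 1 - x + a * x := by
  nlinarith

lemma hasDerivAt_Ff {a x : ℝ} (ha : 0 < a) (hx0 : 0 ≤ x) (hx1 : x < 1) :
    HasDerivAt (Ff a) (Hf a x) x := by
  have hD : (0:ℝ) < 1 - x + a * x := Dpos ha hx0 hx1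
  have h1x : (0:ℝ) < 1 - x := by linarith
  have d1 : HasDerivAt (fun y : ℝ => 1 - y + a * y) (a - 1) x := by
    have := ((hasDerivAt_id x).const_sub 1).add ((hasDerivAt_id x).const_mul a)
    exact this.congr_deriv (by ring)
  have d2 : HasDerivAt (fun y : ℝ => 1 - y) (-1) x := (hasDerivAt_id x).const_sub 1
  have dlogD : HasDerivAt (fun y : ℝ => Real.log (1 - y + a * y)) ((a-1)/(1-x+a*x)) x :=
    d1.log hD.ne'
  have dlog1 : HasDerivAt (fun y : ℝ => Real.log (1 - y)) ((-1)/(1-x)) x :=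
    d2.log h1x.ne'
  have dF := d2.mul (dlogD.sub dlog1)
  have key : -1 * (Real.log (1 - x + a * x) - Real.log (1 - x)) +
      (1 - x) * ((a-1)/(1-x+a*x) - (-1)/(1-x)) = Hf a x := by
    have h2 : (1 - x) * ((a-1)/(1-x+a*x) - (-1)/(1-x)) = a / (1-x+a*x) := by
      field_simp
      ring
    rw [h2, Hf]
    ring
  rw [← key]
  exact dF

lemma hasDerivAt_Hf {a x : ℝ} (ha : 0 < a) (hx0 : 0 ≤ x) (hx1 : x < 1) :
    HasDerivAt (Hf a) (-(a^2) / ((1 - x + a * x)^2 * (1 - x))) x := by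
  have hD : (0:ℝ) < 1 - x + a * x := Dpos ha hx0 hx1
  have h1x : (0:ℝ) < 1 - x := by linarith
  have d1 : HasDerivAt (fun y : ℝ => 1 - y + a * y) (a - 1) x := by
    have := ((hasDerivAt_id x).const_sub 1).add ((hasDerivAt_id x).const_mul a)
    exact this.congr_deriv (by ring)
  have d2 : HasDerivAt (fun y : ℝ => 1 - y) (-1) x := (hasDerivAt_id x).const_sub 1
  have dlogD : HasDerivAt (fun y : ℝ => Real.log (1 - y + a * y)) ((a-1)/(1-x+a*x)) x :=
    d1.log hD.ne'
  have dlog1 : HasDerivAt (fun y : ℝ => Real.log (1 - y)) ((-1)/(1-x)) x :=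
    d2.log h1x.ne'
  have ddiv : HasDerivAt (fun y : ℝ => a / (1 - y + a * y))
      ((0 * (1-x+a*x) - a * (a-1)) / (1-x+a*x)^2) x :=
    (hasDerivAt_const x a).div d1 hD.ne'
  have dH := ddiv.sub (dlogD.sub dlog1)
  have key : (0 * (1-x+a*x) - a * (a-1)) / (1-x+a*x)^2 - ((a-1)/(1-x+a*x) - (-1)/(1-x))
      = -(a^2) / ((1 - x + a * x)^2 * (1 - x)) := by
    field_simp
    ring
  rw [← key]
  exact dH

lemma Hf_anti {a : ℝ} (ha : 0 < a) : StrictAntiOn (Hf a) (Ico 0 1) := by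
  apply strictAntiOn_of_deriv_neg (convex_Ico 0 1)
  · intro x hx
    exact (hasDerivAt_Hf ha hx.1 hx.2).continuousAt.continuousWithinAt
  · intro x hx
    rw [interior_Ico] at hx
    rw [(hasDerivAt_Hf ha hx.1.le hx.2).deriv]
    have hD : (0:ℝ) < 1 - x + a * x := Dpos ha hx.1.le hx.2
    apply div_neg_of_neg_of_pos
    · nlinarith
    · have : (0:ℝ) < 1 - x := by linarith [hx.2]
      positivity

lemma Hf_zero (a : ℝ) : Hf a 0 = a := by
  simp [Hf]

lemma Hf_neg {a : ℝ} (ha : 0 < a) :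
    ∃ α₁ ∈ Ioo (0:ℝ) 1, Hf a α₁ < 0 := by
  have hEpos : 0 < Real.exp (a + 1) := Real.exp_pos _
  set E := Real.exp (a + 1)
  have haE : (0:ℝ) < a + E := by positivity
  refine ⟨E / (a + E), ⟨by positivity, by rw [div_lt_one haE]; linarith⟩, ?_⟩
  have h1x : 1 - E / (a + E) = a / (a + E) := by field_simp; ring
  have hDval : 1 - E / (a + E) + a * (E / (a + E)) = a * (1 + E) / (a + E) := by
    field_simp; ring
  have hlog : Real.log (1 - E / (a + E) + a * (E / (a + E))) - Real.log (1 - E / (a + E))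
      = Real.log (1 + E) := by
    rw [hDval, h1x, Real.log_div (by positivity) haE.ne', Real.log_div ha.ne' haE.ne',
      Real.log_mul ha.ne' (by positivity)]
    ring
  have hfrac : a / (1 - E / (a + E) + a * (E / (a + E))) = (a + E) / (1 + E) := by
    rw [hDval, div_div_eq_mul_div, div_eq_div_iff (by positivity) (by positivity)]
    ring
  rw [Hf, hlog, hfrac]
  have h1 : Real.log E < Real.log (1 + E) := Real.log_lt_log hEpos (by linarith)
  have h2 : Real.log E = a + 1 := Real.log_exp _
  have h3 : (a + E) / (1 + E) < a + 1 := by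
    rw [div_lt_iff₀ (by positivity)]
    nlinarith
  linarith

lemma log_form {a γ : ℝ} (ha : 0 < a) (h0 : 0 ≤ γ) (h1 : γ < 1) :
    Real.log (1 + a * γ / (1 - γ)) = Real.log (1 - γ + a * γ) - Real.log (1 - γ) := by
  have h1γ : (0:ℝ) < 1 - γ := by linarith
  have hD : (0:ℝ) < 1 - γ + a * γ := Dpos ha h0 h1
  have harg : 1 + a * γ / (1 - γ) = (1 - γ + a * γ) / (1 - γ) := by
    field_simp
  rw [harg, Real.log_div hD.ne' h1γ.ne']

lemma eq_iff_Hf {a γ : ℝ} (ha : 0 < a) (h0 : 0 ≤ γ) (h1 : γ < 1) :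
    (Real.log (1 + a * γ / (1 - γ)) = a / (1 - γ + a * γ)) ↔ Hf a γ = 0 := by
  rw [log_form ha h0 h1, Hf]
  constructor <;> intro h <;> linarith

/-- For `a > 0`, there is a unique `α* ∈ (0,1)` with
`ln(1 + aα*/(1−α*)) = a/(1−α* + aα*)`, and the throughput
`g_a(α) = (1−α)·log₂(1 + aα/(1−α))` attains its maximum over `[0,1)` there. -/
theorem stmt_10 (a : ℝ) (ha : 0 < a) :
    (∃! α : ℝ, α ∈ Set.Ioo (0 : ℝ) 1 ∧
      Real.log (1 + a * α / (1 - α)) = a / (1 - α + a * α)) ∧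
    (∀ α : ℝ, α ∈ Set.Ioo (0 : ℝ) 1 →
      Real.log (1 + a * α / (1 - α)) = a / (1 - α + a * α) →
      ∀ β ∈ Set.Ico (0 : ℝ) 1,
        (1 - β) * Real.logb 2 (1 + a * β / (1 - β)) ≤
          (1 - α) * Real.logb 2 (1 + a * α / (1 - α))) := by
  constructor
  · -- existence and uniqueness
    obtain ⟨α₁, hα₁, hneg⟩ := Hf_neg ha
    have cont : ContinuousOn (Hf a) (Icc 0 α₁) := by
      intro x hx
      exact (hasDerivAt_Hf ha hx.1 (lt_of_le_of_lt hx.2 hα₁.2)).continuousAt.continuousWithinAt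
    have hmem : (0:ℝ) ∈ Icc (Hf a α₁) (Hf a 0) := by
      refine ⟨hneg.le, ?_⟩
      rw [Hf_zero]; exact ha.le
    obtain ⟨α, hαmem, hα0⟩ := intermediate_value_Icc' hα₁.1.le cont hmem
    have hαne : α ≠ 0 := by
      intro h
      rw [h, Hf_zero] at hα0
      exact ha.ne' hα0
    have hαIoo : α ∈ Ioo (0:ℝ) 1 :=
      ⟨lt_of_le_of_ne hαmem.1 (Ne.symm hαne), lt_of_le_of_lt hαmem.2 hα₁.2⟩
    refine ⟨α, ⟨hαIoo, (eq_iff_Hf ha hαIoo.1.le hαIoo.2).2 hα0⟩, ?_⟩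
    rintro y ⟨hyIoo, hyeq⟩
    have hy0 : Hf a y = 0 := (eq_iff_Hf ha hyIoo.1.le hyIoo.2).1 hyeq
    exact (Hf_anti ha).injOn ⟨hyIoo.1.le, hyIoo.2⟩ ⟨hαIoo.1.le, hαIoo.2⟩ (by rw [hy0, hα0])
  · -- maximality
    intro α hα heq β hβ
    have hα0 : Hf a α = 0 := (eq_iff_Hf ha hα.1.le hα.2).1 heq
    have hFle : Ff a β ≤ Ff a α := by
      rcases le_total β α with hle | hle
      · have mono : MonotoneOn (Ff a) (Icc 0 α) := by
          apply monotoneOn_of_deriv_nonneg (convex_Icc 0 α)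
          · intro x hx
            exact (hasDerivAt_Ff ha hx.1 (lt_of_le_of_lt hx.2 hα.2)).continuousAt.continuousWithinAt
          · intro x hx
            rw [interior_Icc] at hx
            exact (hasDerivAt_Ff ha hx.1.le (hx.2.trans hα.2)).differentiableAt.differentiableWithinAt
          · intro x hx
            rw [interior_Icc] at hx
            rw [(hasDerivAt_Ff ha hx.1.le (hx.2.trans hα.2)).deriv]
            have := Hf_anti ha ⟨hx.1.le, hx.2.trans hα.2⟩ ⟨hα.1.le, hα.2⟩ hx.2
            linarith [hα0 ▸ this]
        exact mono ⟨hβ.1, hle⟩ ⟨hα.1.le, le_refl α⟩ hle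
      · have anti : AntitoneOn (Ff a) (Icc α β) := by
          apply antitoneOn_of_deriv_nonpos (convex_Icc α β)
          · intro x hx
            have hx0 : 0 ≤ x := le_trans hα.1.le hx.1
            exact (hasDerivAt_Ff ha hx0 (lt_of_le_of_lt hx.2 hβ.2)).continuousAt.continuousWithinAt
          · intro x hx
            rw [interior_Icc] at hx
            exact (hasDerivAt_Ff ha (le_trans hα.1.le hx.1.le)
              (hx.2.trans hβ.2)).differentiableAt.differentiableWithinAt
          · intro x hx
            rw [interior_Icc] at hx
            rw [(hasDerivAt_Ff ha (le_trans hα.1.le hx.1.le) (hx.2.trans hβ.2)).deriv]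
            have := Hf_anti ha ⟨hα.1.le, hα.2⟩ ⟨le_trans hα.1.le hx.1.le, hx.2.trans hβ.2⟩ hx.1
            linarith [hα0 ▸ this]
        exact anti ⟨le_refl α, hle⟩ ⟨hle, le_refl β⟩ hle
    have hlog2 : (0:ℝ) < Real.log 2 := Real.log_pos (by norm_num)
    rw [Real.logb, Real.logb, log_form ha hβ.1 hβ.2, log_form ha hα.1.le hα.2,
      ← mul_div_assoc, ← mul_div_assoc]
    rw [div_le_div_iff_of_pos_right hlog2]
    exact hFle
end

section
/- Let A > 0 and B > 0, and define R : (0,1) → ℝ by R(α) = (1−α)·log₂(1 + min(A, Bα/(1−α))). Let α* be the unique point of (0,1) satisfying ln(1 + Bα*/(1−α*)) = B/(1−α* + Bα*). Then R attains its maximum over (0,1) at the point α̂ = min(α*, A/(A+B)). -/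
private lemma tangent_log (x c : ℝ) (hx : 0 < x) (hc : 0 < c) :
    Real.log x ≤ x / c - 1 + Real.log c := by
  have h := Real.log_le_sub_one_of_pos (div_pos hx hc)
  rw [Real.log_div hx.ne' hc.ne'] at h
  linarith

/-- global max of the concave branch -/
private lemma fmax (B αs : ℝ) (hB : 0 < B) (hαs : αs ∈ Set.Ioo (0:ℝ) 1)
    (hstat : Real.log (1 + B * αs / (1 - αs)) = B / (1 - αs + B * αs)) :
    ∀ α ∈ Set.Ioo (0:ℝ) 1,
      (1 - α) * Real.log (1 + B * α / (1 - α)) ≤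
      (1 - αs) * Real.log (1 + B * αs / (1 - αs)) := by
  obtain ⟨hs0, hs1⟩ := hαs
  intro α hα
  obtain ⟨h0, h1⟩ := hα
  have h1a : 0 < 1 - α := by linarith
  have h1s : 0 < 1 - αs := by linarith
  have hD : 0 < 1 - αs + B * αs := by nlinarith
  have hxa : 0 < B * α / (1 - α) := div_pos (mul_pos hB h0) h1a
  have hxs : 0 < B * αs / (1 - αs) := div_pos (mul_pos hB hs0) h1s
  have ht := tangent_log (1 + B * α / (1 - α)) (1 + B * αs / (1 - αs))
    (by linarith) (by linarith)
  have h2 : (1 - α) * Real.log (1 + B * α / (1 - α)) ≤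
      (1 - α) * ((1 + B * α / (1 - α)) / (1 + B * αs / (1 - αs)) - 1
        + Real.log (1 + B * αs / (1 - αs))) :=
    mul_le_mul_of_nonneg_left ht h1a.le
  refine h2.trans (le_of_eq ?_)
  rw [hstat]
  have hcs : (1 + B * αs / (1 - αs)) ≠ 0 := by positivity
  field_simp
  ring



private lemma ivt_lemma (A B αstar : ℝ) (hA : 0 < A) (hB : 0 < B)
    (hαstar : αstar ∈ Set.Ioo (0 : ℝ) 1)
    (huniq : ∀ α ∈ Set.Ioo (0 : ℝ) 1,
      Real.log (1 + B * α / (1 - α)) = B / (1 - α + B * α) → α = αstar)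
    (htlt : A / (A + B) < αstar) :
    Real.log (1 + A) ≤ (A + B) / (1 + A) := by
  set t := A / (A + B) with htdef
  have hAB : 0 < A + B := by linarith
  have ht0 : 0 < t := div_pos hA hAB
  have ht1 : t < 1 := (div_lt_one hAB).mpr (by linarith)
  by_contra hcon
  push_neg at hcon
  set α₀ := min t (1 / (B + 2)) with hα₀def
  have hα₀0 : 0 < α₀ := lt_min ht0 (by positivity)
  have hα₀t : α₀ ≤ t := min_le_left _ _
  have hα₀1 : α₀ < 1 := lt_of_le_of_lt hα₀t ht1
  have h1α₀ : 0 < 1 - α₀ := by linarith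
  have hD₀ : 0 < 1 - α₀ + B * α₀ := by nlinarith
  set F : ℝ → ℝ := fun α => B / (1 - α + B * α) - Real.log (1 + B * α / (1 - α)) with hFdef
  -- F α₀ > 0
  have hx0 : 0 < B * α₀ / (1 - α₀) := div_pos (mul_pos hB hα₀0) h1α₀
  have hlog : Real.log (1 + B * α₀ / (1 - α₀)) < B * α₀ / (1 - α₀) := by
    have h := Real.log_lt_sub_one_of_pos (show (0:ℝ) < 1 + B * α₀ / (1 - α₀) by linarith)
      (by linarith)
    linarith
  have hq : α₀ * (B + 2) ≤ 1 := by
    have : α₀ ≤ 1 / (B + 2) := min_le_right _ _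
    rw [le_div_iff₀ (by positivity)] at this
    linarith
  have hstep : B * α₀ / (1 - α₀) ≤ B / (1 - α₀ + B * α₀) := by
    have haux : α₀ * (1 - α₀ + B * α₀) ≤ 1 - α₀ := by
      have h1 : B * α₀ ≤ 1 - 2 * α₀ := by linarith
      have h2 := mul_le_mul_of_nonneg_right h1 hα₀0.le
      nlinarith [sq_nonneg (2 * α₀ - 1)]
    rw [div_le_div_iff₀ h1α₀ hD₀]
    nlinarith [mul_le_mul_of_nonneg_left haux hB.le]
  have hF0 : 0 < F α₀ := by
    simp only [hFdef]
    linarith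
  -- F t < 0
  have h1t : 0 < 1 - t := by linarith
  have harg : 1 + B * t / (1 - t) = 1 + A := by
    rw [htdef]
    field_simp
    rw [show A + B - A = B by ring, mul_div_cancel_left₀ _ hB.ne']
  have hden : 1 - t + B * t = B * (1 + A) / (A + B) := by
    rw [htdef]
    field_simp
    ring
  have hFt : F t < 0 := by
    simp only [hFdef, harg, hden]
    have : B / (B * (1 + A) / (A + B)) = (A + B) / (1 + A) := by
      field_simp
    rw [this]
    linarith
  -- continuity
  have hcont : ContinuousOn F (Set.Icc α₀ t) := by
    have hsub : ∀ x ∈ Set.Icc α₀ t, 0 < 1 - x ∧ 0 < 1 - x + B * x := by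
      intro x hx
      obtain ⟨hx1, hx2⟩ := hx
      constructor
      · linarith
      · nlinarith
    have c1 : ContinuousOn (fun α => B / (1 - α + B * α)) (Set.Icc α₀ t) := by
      apply ContinuousOn.div continuousOn_const (by fun_prop)
      intro x hx; exact (hsub x hx).2.ne'
    have c3 : ContinuousOn (fun α => 1 + B * α / (1 - α)) (Set.Icc α₀ t) := by
      apply ContinuousOn.add continuousOn_const
      apply ContinuousOn.div (by fun_prop) (by fun_prop)
      intro x hx; exact (hsub x hx).1.ne'
    have c4 : ContinuousOn (fun α => Real.log (1 + B * α / (1 - α))) (Set.Icc α₀ t) := by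
      apply ContinuousOn.log c3
      intro x hx
      have h1x := (hsub x hx).1
      have hx0' : 0 < α₀ := hα₀0
      have : 0 ≤ B * x / (1 - x) := by
        apply div_nonneg (by nlinarith [hx.1]) h1x.le
      linarith
    exact c1.sub c4
  have hivt := intermediate_value_Icc' hα₀t hcont
  have h0mem : (0:ℝ) ∈ Set.Icc (F t) (F α₀) := ⟨hFt.le, hF0.le⟩
  obtain ⟨c, hc, hFc⟩ := hivt h0mem
  have hc' : c ∈ Set.Ioo (0:ℝ) 1 := ⟨lt_of_lt_of_le hα₀0 hc.1, lt_of_le_of_lt hc.2 ht1⟩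
  have heq : Real.log (1 + B * c / (1 - c)) = B / (1 - c + B * c) := by
    simp only [hFdef] at hFc
    linarith
  have := huniq c hc' heq
  rw [this] at hc
  linarith [hc.2]

/-- Optimal time-split for the TZF/RZF schemes: with
`R(α) = (1−α)·log₂(1 + min(A, Bα/(1−α)))` and `α*` the stationary point of the
concave branch, the maximum of `R` over `(0,1)` is attained at
`min(α*, A/(A+B))`. -/
theorem stmt_11 (A B : ℝ) (hA : 0 < A) (hB : 0 < B)
    (αstar : ℝ) (hαstar : αstar ∈ Set.Ioo (0 : ℝ) 1)
    (hstat : Real.log (1 + B * αstar / (1 - αstar)) = B / (1 - αstar + B * αstar))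
    (huniq : ∀ α ∈ Set.Ioo (0 : ℝ) 1,
      Real.log (1 + B * α / (1 - α)) = B / (1 - α + B * α) → α = αstar) :
    min αstar (A / (A + B)) ∈ Set.Ioo (0 : ℝ) 1 ∧
    ∀ α ∈ Set.Ioo (0 : ℝ) 1,
      (1 - α) * Real.logb 2 (1 + min A (B * α / (1 - α))) ≤
        (1 - min αstar (A / (A + B))) *
          Real.logb 2 (1 + min A (B * min αstar (A / (A + B)) /
            (1 - min αstar (A / (A + B))))) := by
  obtain ⟨hs0, hs1⟩ := hαstar
  have hAB : 0 < A + B := by linarith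
  set t := A / (A + B) with htdef
  have ht0 : 0 < t := div_pos hA hAB
  have ht1 : t < 1 := (div_lt_one hAB).mpr (by linarith)
  have h1s : 0 < 1 - αstar := by linarith
  have hlog2 : 0 < Real.log 2 := Real.log_pos (by norm_num)
  refine ⟨⟨lt_min hs0 ht0, lt_of_le_of_lt (min_le_left _ _) hs1⟩, ?_⟩
  intro α hα
  obtain ⟨h0, h1⟩ := hα
  have h1a : 0 < 1 - α := by linarith
  have hxa : 0 < B * α / (1 - α) := div_pos (mul_pos hB h0) h1a
  have hmin0 : 0 ≤ min A (B * α / (1 - α)) := le_min hA.le hxa.le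
  suffices key : (1 - α) * Real.log (1 + min A (B * α / (1 - α))) ≤
      (1 - min αstar t) * Real.log (1 + min A (B * min αstar t / (1 - min αstar t))) by
    simp only [Real.logb]
    rw [← mul_div_assoc, ← mul_div_assoc]
    exact div_le_div_of_nonneg_right key hlog2.le
  rcases le_or_gt αstar t with hcase | hcase
  · -- optimal point is αstar
    rw [min_eq_left hcase]
    have hxs : B * αstar / (1 - αstar) ≤ A := by
      rw [div_le_iff₀ h1s]
      have h2 := (le_div_iff₀ hAB).mp (htdef ▸ hcase)
      nlinarith
    rw [min_eq_right hxs]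
    calc (1 - α) * Real.log (1 + min A (B * α / (1 - α)))
        ≤ (1 - α) * Real.log (1 + B * α / (1 - α)) := by
          apply mul_le_mul_of_nonneg_left _ h1a.le
          apply Real.log_le_log (by linarith)
          linarith [min_le_right A (B * α / (1 - α))]
      _ ≤ (1 - αstar) * Real.log (1 + B * αstar / (1 - αstar)) :=
          fmax B αstar hB ⟨hs0, hs1⟩ hstat α ⟨h0, h1⟩
  · -- optimal point is t
    rw [min_eq_right hcase.le]
    have h1t : 0 < 1 - t := by linarith
    have hBt : B * t / (1 - t) = A := by
      rw [htdef]
      field_simp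
      rw [show A + B - A = B by ring, div_self hB.ne']
    rw [hBt, min_self]
    have hlogA : 0 ≤ Real.log (1 + A) := Real.log_nonneg (by linarith)
    have hkey2 : Real.log (1 + A) ≤ (A + B) / (1 + A) :=
      ivt_lemma A B αstar hA hB ⟨hs0, hs1⟩ huniq hcase
    rcases le_or_gt α t with hαt | hαt
    · have htan := tangent_log (1 + B * α / (1 - α)) (1 + A) (by linarith) (by linarith)
      have step1 : (1 - α) * Real.log (1 + min A (B * α / (1 - α))) ≤
          (1 - α) * Real.log (1 + B * α / (1 - α)) := by
        apply mul_le_mul_of_nonneg_left _ h1a.le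
        apply Real.log_le_log (by linarith)
        linarith [min_le_right A (B * α / (1 - α))]
      have step2 : (1 - α) * Real.log (1 + B * α / (1 - α)) ≤
          (1 - α) * ((1 + B * α / (1 - α)) / (1 + A) - 1) + (1 - α) * Real.log (1 + A) := by
        have := mul_le_mul_of_nonneg_left htan h1a.le
        linarith [this]
      have step3 : (1 - α) * ((1 + B * α / (1 - α)) / (1 + A) - 1) =
          (α - t) * ((A + B) / (1 + A)) := by
        rw [htdef]
        field_simp
        ring
      have step4 : (α - t) * ((A + B) / (1 + A)) ≤ (α - t) * Real.log (1 + A) :=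
        mul_le_mul_of_nonpos_left hkey2 (by linarith)
      have step5 : (α - t) * Real.log (1 + A) + (1 - α) * Real.log (1 + A) =
          (1 - t) * Real.log (1 + A) := by ring
      linarith
    · have step1 : (1 - α) * Real.log (1 + min A (B * α / (1 - α))) ≤
          (1 - α) * Real.log (1 + A) := by
        apply mul_le_mul_of_nonneg_left _ h1a.le
        apply Real.log_le_log (by linarith)
        linarith [min_le_left A (B * α / (1 - α))]
      calc (1 - α) * Real.log (1 + min A (B * α / (1 - α)))
          ≤ (1 - α) * Real.log (1 + A) := step1
        _ ≤ (1 - t) * Real.log (1 + A) :=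
            mul_le_mul_of_nonneg_right (by linarith) hlogA
end

section
/- Let f > 0 and let b₁, b₂ be reals with 0 ≤ b₁ ≤ b₂ and b₂ > 0. Then the function α ↦ (1−α)·log₂(1 + f·(1 − αb₁/(1−α+αb₂))) is strictly decreasing on the interval [0,1). -/
/-- For `f > 0` and `0 ≤ b₁ ≤ b₂` with `b₂ > 0`, the function
`α ↦ (1−α)·log₂(1 + f·(1 − αb₁/(1−α+αb₂)))` is strictly decreasing on `[0,1)`. -/
theorem stmt_12 (f b₁ b₂ : ℝ) (hf : 0 < f) (hb₁ : 0 ≤ b₁) (hb₁₂ : b₁ ≤ b₂)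
    (hb₂ : 0 < b₂) :
    StrictAntiOn
      (fun α : ℝ => (1 - α) * Real.logb 2 (1 + f * (1 - α * b₁ / (1 - α + α * b₂))))
      (Set.Ico (0 : ℝ) 1) := by
  intro x hx y hy hxy
  obtain ⟨hx0, hx1⟩ := hx
  obtain ⟨hy0, hy1⟩ := hy
  have hDx : 0 < 1 - x + x * b₂ := by nlinarith
  have hDy : 0 < 1 - y + y * b₂ := by nlinarith
  -- ratio monotone
  have hr : x * b₁ / (1 - x + x * b₂) ≤ y * b₁ / (1 - y + y * b₂) := by
    rw [div_le_div_iff₀ hDx hDy]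
    nlinarith
  have hry : y * b₁ / (1 - y + y * b₂) < 1 := by
    rw [div_lt_one hDy]
    nlinarith
  have hAy : (1 : ℝ) < 1 + f * (1 - y * b₁ / (1 - y + y * b₂)) := by nlinarith
  have hA : 1 + f * (1 - y * b₁ / (1 - y + y * b₂))
      ≤ 1 + f * (1 - x * b₁ / (1 - x + x * b₂)) := by nlinarith
  have hLy : 0 < Real.logb 2 (1 + f * (1 - y * b₁ / (1 - y + y * b₂))) :=
    Real.logb_pos one_lt_two hAy
  have hL : Real.logb 2 (1 + f * (1 - y * b₁ / (1 - y + y * b₂)))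
      ≤ Real.logb 2 (1 + f * (1 - x * b₁ / (1 - x + x * b₂))) :=
    Real.logb_le_logb_of_le one_lt_two (by linarith) hA
  have hLx : 0 < Real.logb 2 (1 + f * (1 - x * b₁ / (1 - x + x * b₂))) :=
    lt_of_lt_of_le hLy hL
  simp only
  calc (1 - y) * Real.logb 2 (1 + f * (1 - y * b₁ / (1 - y + y * b₂)))
      ≤ (1 - y) * Real.logb 2 (1 + f * (1 - x * b₁ / (1 - x + x * b₂))) := by
        exact mul_le_mul_of_nonneg_left hL (by linarith)
    _ < (1 - x) * Real.logb 2 (1 + f * (1 - x * b₁ / (1 - x + x * b₂))) := by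
        apply mul_lt_mul_of_pos_right (by linarith) hLx
end

section
/- Let b₀ > 0, b₂ > 0 and 0 ≤ b₁ ≤ b₂, and define α₀ = ((b₂−b₁−b₀) + √(b₀² + (b₂−b₁)² + 2b₀(b₁+b₂))) / (2b₀b₂). Then for every α ∈ (0,1), the inequality b₀α/(1−α) < 1 − αb₁/(1−α+αb₂) holds if and only if α < α₀/(1+α₀). -/
set_option maxHeartbeats 2000000 in
/-- Branch-switching threshold of Proposition 3: for `α ∈ (0,1)`,
`b₀α/(1−α) < 1 − αb₁/(1−α+αb₂)` holds iff `α < α₀/(1+α₀)` where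
`α₀ = ((b₂−b₁−b₀) + √(b₀² + (b₂−b₁)² + 2b₀(b₁+b₂)))/(2b₀b₂)`. -/
theorem stmt_13 (b₀ b₁ b₂ : ℝ) (hb₀ : 0 < b₀) (hb₂ : 0 < b₂) (hb₁ : 0 ≤ b₁)
    (hb₁₂ : b₁ ≤ b₂) (α : ℝ) (hα : α ∈ Set.Ioo (0 : ℝ) 1) :
    b₀ * α / (1 - α) < 1 - α * b₁ / (1 - α + α * b₂) ↔
      α < (((b₂ - b₁ - b₀) + Real.sqrt (b₀ ^ 2 + (b₂ - b₁) ^ 2 + 2 * b₀ * (b₁ + b₂))) /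
            (2 * b₀ * b₂)) /
          (1 + ((b₂ - b₁ - b₀) + Real.sqrt (b₀ ^ 2 + (b₂ - b₁) ^ 2 + 2 * b₀ * (b₁ + b₂))) /
            (2 * b₀ * b₂)) := by
  obtain ⟨hα0, hα1⟩ := hα
  have hu : (0:ℝ) < 1 - α := by linarith
  have hv : (0:ℝ) < 1 - α + α * b₂ := by nlinarith
  have hDnn : (0:ℝ) ≤ b₀ ^ 2 + (b₂ - b₁) ^ 2 + 2 * b₀ * (b₁ + b₂) := by
    nlinarith [sq_nonneg (b₀ + b₁ - b₂)]
  set s := Real.sqrt (b₀ ^ 2 + (b₂ - b₁) ^ 2 + 2 * b₀ * (b₁ + b₂)) with hs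
  have hs0 : 0 ≤ s := Real.sqrt_nonneg _
  have hsD : s ^ 2 = (b₀ + b₁ - b₂) ^ 2 + 4 * b₀ * b₂ := by
    rw [hs, Real.sq_sqrt hDnn]; ring
  clear_value s
  have hspos : 0 < s := by nlinarith [sq_nonneg (b₀ + b₁ - b₂), mul_pos hb₀ hb₂]
  have hc1 : b₀ + b₁ - b₂ < s := by nlinarith [mul_pos hb₀ hb₂]
  have hc2 : -(b₀ + b₁ - b₂) < s := by nlinarith [mul_pos hb₀ hb₂]
  have ha : (0:ℝ) < 2 * b₀ * b₂ := by positivity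
  set N := (b₂ - b₁ - b₀) + s with hN
  clear_value N
  have hNpos : 0 < N := by rw [hN]; linarith
  -- RHS equivalence
  have hR : (α < N / (2 * b₀ * b₂) / (1 + N / (2 * b₀ * b₂))) ↔
      α * (2 * b₀ * b₂) < (1 - α) * N := by
    have hrw : N / (2 * b₀ * b₂) / (1 + N / (2 * b₀ * b₂)) = N / (2 * b₀ * b₂ + N) := by
      rw [div_div]
      congr 1
      field_simp
    rw [hrw, lt_div_iff₀ (by linarith : (0:ℝ) < 2 * b₀ * b₂ + N)]
    constructor <;> intro h <;> linarith [h]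
  rw [hR]
  -- LHS: reduce to quadratic
  have hL : (b₀ * α / (1 - α) < 1 - α * b₁ / (1 - α + α * b₂)) ↔
      b₀ * b₂ * α ^ 2 + (b₀ + b₁ - b₂) * α * (1 - α) - (1 - α) ^ 2 < 0 := by
    rw [div_lt_iff₀ hu,
      show (1 - α * b₁ / (1 - α + α * b₂)) = ((1 - α + α * b₂) - α * b₁) / (1 - α + α * b₂) by
        field_simp,
      div_mul_eq_mul_div, lt_div_iff₀ hv]
    constructor <;> intro h <;> nlinarith
  rw [hL]
  have hsu : 0 < s * (1 - α) := mul_pos hspos hu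
  have hs2u : (s * (1 - α)) ^ 2 =
      ((b₀ + b₁ - b₂) ^ 2 + 4 * b₀ * b₂) * (1 - α) ^ 2 := by rw [mul_pow, hsD]
  constructor
  · intro h
    have h4 := mul_neg_of_pos_of_neg ha h
    have hX2 : (2 * b₀ * b₂ * α + (b₀ + b₁ - b₂) * (1 - α)) ^ 2 < (s * (1 - α)) ^ 2 := by
      nlinarith [h4, hs2u]
    have hX := lt_of_pow_lt_pow_left₀ 2 (le_of_lt hsu) hX2
    rw [hN]; linarith
  · intro h
    rw [hN] at h
    have hXlt : 2 * b₀ * b₂ * α + (b₀ + b₁ - b₂) * (1 - α) < s * (1 - α) := by linarith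
    have hsum : 0 < (s + (b₀ + b₁ - b₂)) * (1 - α) :=
      mul_pos (by linarith) hu
    have hXgt : 0 < s * (1 - α) + (2 * b₀ * b₂ * α + (b₀ + b₁ - b₂) * (1 - α)) := by
      linarith [mul_pos ha hα0, hsum]
    have hprod := mul_pos
      (by linarith : 0 < s * (1 - α) - (2 * b₀ * b₂ * α + (b₀ + b₁ - b₂) * (1 - α))) hXgt
    by_contra hcon
    push_neg at hcon
    have h7 : 0 ≤ 2 * b₀ * b₂ * (b₀ * b₂ * α ^ 2 + (b₀ + b₁ - b₂) * α * (1 - α) - (1 - α) ^ 2) :=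
      mul_nonneg (le_of_lt ha) hcon
    have h8 : 0 < ((b₀ + b₁ - b₂) ^ 2 + 4 * b₀ * b₂) * (1 - α) ^ 2 -
        (2 * b₀ * b₂ * α + (b₀ + b₁ - b₂) * (1 - α)) ^ 2 := by
      rw [← hs2u]; nlinarith [hprod]
    linarith [h7, h8]
end

section
/- Let f > 0, b₀ > 0 and 0 < b₁ ≤ b₂, and define R : (0,1) → ℝ by R(α) = (1−α)·log₂(1 + f·min(1 − αb₁/(1−α+αb₂), b₀α/(1−α))). Let α* be the unique point of (0,1) satisfying ln(1 + f·b₀·α*/(1−α*)) = f·b₀/(1−α* + f·b₀·α*), and let α₀ = ((b₂−b₁−b₀) + √(b₀² + (b₂−b₁)² + 2b₀(b₁+b₂))) / (2b₀b₂). Then R attains its maximum over (0,1) at the point min(α*, α₀/(1+α₀)). -/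
open Real Set

-- derivative of s ↦ log (1 + c*s)
lemma hd_log (c s : ℝ) (h : 0 < 1 + c*s) :
    HasDerivAt (fun s => Real.log (1 + c*s)) (c / (1 + c*s)) s := by
  have h1 : HasDerivAt (fun s : ℝ => 1 + c*s) c s := by
    simpa using ((hasDerivAt_id s).const_mul c).const_add 1
  have := (Real.hasDerivAt_log h.ne').comp s h1
  rw [div_eq_inv_mul]; exact this

-- ψ(s) = c(1+s)/(1+cs) - log(1+cs)
lemma hd_psi (c s : ℝ) (h : 0 < 1 + c*s) :
    HasDerivAt (fun s => c*(1+s)/(1+c*s) - Real.log (1+c*s))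
      ((c*(1+c*s) - c*(1+s)*c)/(1+c*s)^2 - c/(1+c*s)) s := by
  have h1 : HasDerivAt (fun s : ℝ => c*(1+s)) c s := by
    simpa using (((hasDerivAt_id s).const_add 1).const_mul c)
  have h2 : HasDerivAt (fun s : ℝ => 1 + c*s) c s := by
    simpa using ((hasDerivAt_id s).const_mul c).const_add 1
  exact (h1.div h2 h.ne').sub (hd_log c s h)

lemma psi_deriv_neg (c s : ℝ) (hc : 0 < c) (hs : 0 ≤ s) :
    (c*(1+c*s) - c*(1+s)*c)/(1+c*s)^2 - c/(1+c*s) < 0 := by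
  have h : 0 < 1 + c*s := by positivity
  rw [div_sub_div _ _ (by positivity) h.ne', div_neg_iff]
  right
  constructor
  · nlinarith [mul_pos h (mul_pos (mul_pos hc hc) (show (0:ℝ) < 1+s by linarith))]
  · positivity

lemma psi_strictAnti (c : ℝ) (hc : 0 < c) :
    StrictAntiOn (fun s => c*(1+s)/(1+c*s) - Real.log (1+c*s)) (Ici 0) := by
  apply strictAntiOn_of_deriv_neg (convex_Ici 0)
  · apply ContinuousOn.sub
    · apply ContinuousOn.div (by fun_prop) (by fun_prop)
      intro x hx; have : (0:ℝ) ≤ x := hx; positivity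
    · apply ContinuousOn.log (by fun_prop)
      intro x hx; have : (0:ℝ) ≤ x := hx; positivity
  · intro x hx
    rw [interior_Ici] at hx
    have hx' : 0 < 1 + c*x := by have : (0:ℝ) < x := hx; positivity
    rw [(hd_psi c x hx').deriv]
    exact psi_deriv_neg c x hc (le_of_lt hx)

lemma hd_phi (c s : ℝ) (h : 0 < 1 + c*s) (h1 : 0 < 1 + s) :
    HasDerivAt (fun s => Real.log (1+c*s)/(1+s))
      ((c/(1+c*s)*(1+s) - Real.log (1+c*s))/(1+s)^2) s := by
  have h2 : HasDerivAt (fun s : ℝ => 1 + s) 1 s := by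
    simpa using (hasDerivAt_id s).const_add 1
  have := (hd_log c s h).div h2 h1.ne'
  rw [mul_one] at this; exact this

lemma phi_cont (c : ℝ) (hc : 0 < c) : ContinuousOn (fun s => Real.log (1+c*s)/(1+s)) (Ici 0) := by
  apply ContinuousOn.div
  · apply ContinuousOn.log (by fun_prop)
    intro x hx; have : (0:ℝ) ≤ x := hx; positivity
  · fun_prop
  · intro x hx; have : (0:ℝ) ≤ x := hx; positivity

-- ψ sign: from strictAnti and ψ(t)=0
lemma phi_mono (c t : ℝ) (hc : 0 < c) (ht : 0 < t)
    (hpsi : c*(1+t)/(1+c*t) - Real.log (1+c*t) = 0) :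
    MonotoneOn (fun s => Real.log (1+c*s)/(1+s)) (Icc 0 t) := by
  apply monotoneOn_of_deriv_nonneg (convex_Icc 0 t) ((phi_cont c hc).mono Icc_subset_Ici_self)
  · intro x hx
    rw [interior_Icc] at hx
    have hx' : 0 < 1 + c*x := by have := hx.1; positivity
    exact (hd_phi c x hx' (by linarith [hx.1])).differentiableAt.differentiableWithinAt
  · intro x hx
    rw [interior_Icc] at hx
    have hx' : 0 < 1 + c*x := by have := hx.1; positivity
    rw [(hd_phi c x hx' (by linarith [hx.1])).deriv]
    have hψ : 0 < c*(1+x)/(1+c*x) - Real.log (1+c*x) := by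
      have := psi_strictAnti c hc (le_of_lt hx.1) (le_of_lt (lt_trans hx.1 hx.2) : (0:ℝ) ≤ t) hx.2
      simp only at this
      linarith [this, hpsi]
    have : 0 ≤ c/(1+c*x)*(1+x) - Real.log (1+c*x) := by
      have he : c/(1+c*x)*(1+x) = c*(1+x)/(1+c*x) := by ring
      rw [he]; linarith
    positivity

lemma phi_anti (c t : ℝ) (hc : 0 < c) (ht : 0 < t)
    (hpsi : c*(1+t)/(1+c*t) - Real.log (1+c*t) = 0) :
    AntitoneOn (fun s => Real.log (1+c*s)/(1+s)) (Ici t) := by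
  apply antitoneOn_of_deriv_nonpos (convex_Ici t)
    ((phi_cont c hc).mono (Ici_subset_Ici.mpr (le_of_lt ht)))
  · intro x hx
    rw [interior_Ici] at hx
    have hx0 : 0 < x := lt_trans ht hx
    have hx' : 0 < 1 + c*x := by positivity
    exact (hd_phi c x hx' (by linarith)).differentiableAt.differentiableWithinAt
  · intro x hx
    rw [interior_Ici] at hx
    have hx0 : 0 < x := lt_trans ht hx
    have hx' : 0 < 1 + c*x := by positivity
    rw [(hd_phi c x hx' (by linarith)).deriv]
    have hψ : c*(1+x)/(1+c*x) - Real.log (1+c*x) < 0 := by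
      have := psi_strictAnti c hc (le_of_lt ht) (le_of_lt hx0 : (0:ℝ) ≤ x) hx
      simp only at this
      linarith [this, hpsi]
    apply div_nonpos_of_nonpos_of_nonneg
    · have he : c/(1+c*x)*(1+x) = c*(1+x)/(1+c*x) := by ring
      rw [he]; linarith
    · positivity

lemma phi_max (c t : ℝ) (hc : 0 < c) (ht : 0 < t)
    (hpsi : c*(1+t)/(1+c*t) - Real.log (1+c*t) = 0) :
    ∀ s, 0 ≤ s → Real.log (1+c*s)/(1+s) ≤ Real.log (1+c*t)/(1+t) := by
  intro s hs
  rcases le_or_gt s t with h | h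
  · exact phi_mono c t hc ht hpsi ⟨hs, h⟩ ⟨le_of_lt ht, le_refl t⟩ h
  · exact phi_anti c t hc ht hpsi (le_refl t) (le_of_lt h) (le_of_lt h)


set_option maxHeartbeats 2000000 in
/-- Proposition 3: the instantaneous throughput of the optimum scheme
`R(α) = (1−α)·log₂(1 + f·min(1 − αb₁/(1−α+αb₂), b₀α/(1−α)))` attains its
maximum over `(0,1)` at `min(α*, α₀/(1+α₀))`, where `α*` is the stationary
point of the concave branch and `α₀` the branch-switching root. -/
theorem stmt_14 (f b₀ b₁ b₂ : ℝ) (hf : 0 < f) (hb₀ : 0 < b₀) (hb₁ : 0 < b₁)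
    (hb₁₂ : b₁ ≤ b₂)
    (αstar : ℝ) (hαstar : αstar ∈ Set.Ioo (0 : ℝ) 1)
    (hstat : Real.log (1 + f * b₀ * αstar / (1 - αstar)) =
      f * b₀ / (1 - αstar + f * b₀ * αstar))
    (huniq : ∀ α ∈ Set.Ioo (0 : ℝ) 1,
      Real.log (1 + f * b₀ * α / (1 - α)) = f * b₀ / (1 - α + f * b₀ * α) → α = αstar)
    (α₀ : ℝ)
    (hα₀ : α₀ = ((b₂ - b₁ - b₀) +
        Real.sqrt (b₀ ^ 2 + (b₂ - b₁) ^ 2 + 2 * b₀ * (b₁ + b₂))) / (2 * b₀ * b₂)) :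
    min αstar (α₀ / (1 + α₀)) ∈ Set.Ioo (0 : ℝ) 1 ∧
    ∀ α ∈ Set.Ioo (0 : ℝ) 1,
      (1 - α) * Real.logb 2
          (1 + f * min (1 - α * b₁ / (1 - α + α * b₂)) (b₀ * α / (1 - α))) ≤
        (1 - min αstar (α₀ / (1 + α₀))) * Real.logb 2
          (1 + f * min
            (1 - min αstar (α₀ / (1 + α₀)) * b₁ /
              (1 - min αstar (α₀ / (1 + α₀)) + min αstar (α₀ / (1 + α₀)) * b₂))
            (b₀ * min αstar (α₀ / (1 + α₀)) / (1 - min αstar (α₀ / (1 + α₀))))) := by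
  clear huniq
  obtain ⟨hαs0, hαs1⟩ := hαstar
  have hb₂ : 0 < b₂ := lt_of_lt_of_le hb₁ hb₁₂
  set c : ℝ := f * b₀ with hc_def
  have hc : 0 < c := mul_pos hf hb₀
  -- facts about α₀
  set D : ℝ := b₀ ^ 2 + (b₂ - b₁) ^ 2 + 2 * b₀ * (b₁ + b₂) with hD_def
  have hD : 0 ≤ D := by positivity
  have hs2 : Real.sqrt D ^ 2 = D := Real.sq_sqrt hD
  have hsnn : 0 ≤ Real.sqrt D := Real.sqrt_nonneg D
  have hα₀pos : 0 < α₀ := by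
    rw [hα₀]
    apply div_pos _ (by positivity)
    nlinarith [mul_pos hb₀ hb₂]
  have hquad : b₀ * b₂ * α₀ ^ 2 + (b₀ + b₁ - b₂) * α₀ = 1 := by
    rw [hα₀]
    field_simp
    nlinarith [hs2]
  set β : ℝ := α₀ / (1 + α₀) with hβ_def
  have h1α₀ : 0 < 1 + α₀ := by linarith
  have hβ0 : 0 < β := div_pos hα₀pos h1α₀
  have hβ1 : β < 1 := by
    rw [hβ_def, div_lt_one h1α₀]; linarith
  -- equality of branches at β
  have heq : 1 - β * b₁ / (1 - β + β * b₂) = b₀ * β / (1 - β) := by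
    rw [hβ_def]
    have h2 : (0:ℝ) < 1 + α₀ * b₂ := by positivity
    have e1 : 1 - (α₀ / (1 + α₀)) + (α₀ / (1 + α₀)) * b₂ = (1 + α₀ * b₂) / (1 + α₀) := by
      field_simp
      ring
    have e2 : 1 - (α₀ / (1 + α₀)) = 1 / (1 + α₀) := by field_simp; ring
    rw [e1, e2]
    have e3 : α₀ / (1 + α₀) * b₁ / ((1 + α₀ * b₂) / (1 + α₀)) = α₀ * b₁ / (1 + α₀ * b₂) := by
      field_simp
    have e4 : b₀ * (α₀ / (1 + α₀)) / (1 / (1 + α₀)) = b₀ * α₀ := by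
      field_simp
    have e5 : α₀ * b₁ / (1 + α₀ * b₂) = 1 - b₀ * α₀ := by
      rw [div_eq_iff h2.ne']; linear_combination hquad
    rw [e3, e4, e5]; ring
  -- monotonicity of branches
  have hHmono : ∀ x y : ℝ, 0 < x → x < 1 → 0 < y → y < 1 → x ≤ y →
      b₀ * x / (1 - x) ≤ b₀ * y / (1 - y) := by
    intro x y hx0 hx1 hy0 hy1 hxy
    rw [div_le_div_iff₀ (by linarith) (by linarith)]
    nlinarith
  have hGanti : ∀ x y : ℝ, 0 < x → x < 1 → 0 < y → y < 1 → x ≤ y →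
      1 - y * b₁ / (1 - y + y * b₂) ≤ 1 - x * b₁ / (1 - x + x * b₂) := by
    intro x y hx0 hx1 hy0 hy1 hxy
    have hdx : (0:ℝ) < 1 - x + x * b₂ := by nlinarith
    have hdy : (0:ℝ) < 1 - y + y * b₂ := by nlinarith
    have : x * b₁ / (1 - x + x * b₂) ≤ y * b₁ / (1 - y + y * b₂) := by
      rw [div_le_div_iff₀ hdx hdy]
      nlinarith
    linarith
  have hGpos : ∀ x : ℝ, 0 < x → x < 1 → 0 < 1 - x * b₁ / (1 - x + x * b₂) := by
    intro x hx0 hx1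
    have hdx : (0:ℝ) < 1 - x + x * b₂ := by nlinarith
    have : x * b₁ / (1 - x + x * b₂) < 1 := by
      rw [div_lt_one hdx]; nlinarith
    linarith
  -- the concave branch as φ
  have hFexpr : ∀ x : ℝ, 0 < x → x < 1 →
      (1 - x) * Real.logb 2 (1 + f * (b₀ * x / (1 - x))) =
        Real.log (1 + c * (x / (1 - x))) / (1 + x / (1 - x)) / Real.log 2 := by
    intro x hx0 hx1
    have hx1' : (0:ℝ) < 1 - x := by linarith
    have e1 : 1 + f * (b₀ * x / (1 - x)) = 1 + c * (x / (1 - x)) := by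
      rw [hc_def]; ring
    have e2 : 1 + x / (1 - x) = 1 / (1 - x) := by field_simp; ring
    rw [Real.logb, e1, e2, one_div, div_inv_eq_mul]
    ring
  -- s map
  have hsmono : ∀ x y : ℝ, 0 < x → x < 1 → 0 < y → y < 1 → x ≤ y →
      x / (1 - x) ≤ y / (1 - y) := by
    intro x y hx0 hx1 hy0 hy1 hxy
    rw [div_le_div_iff₀ (by linarith) (by linarith)]
    nlinarith
  set st : ℝ := αstar / (1 - αstar) with hst_def
  have hst0 : 0 < st := div_pos hαs0 (by linarith)
  have hpsi0 : c * (1 + st) / (1 + c * st) - Real.log (1 + c * st) = 0 := by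
    have h1 : (0:ℝ) < 1 - αstar := by linarith
    have e1 : 1 + f * b₀ * αstar / (1 - αstar) = 1 + c * st := by
      rw [hst_def, hc_def]; ring
    have e2 : f * b₀ / (1 - αstar + f * b₀ * αstar) = c * (1 + st) / (1 + c * st) := by
      rw [hst_def, hc_def]
      have hd : (0:ℝ) < 1 - αstar + f * b₀ * αstar := by nlinarith
      field_simp
      ring
    rw [e1, e2] at hstat
    linarith
  -- the maximizer
  have hm0 : 0 < min αstar β := lt_min hαs0 hβ0
  have hm1 : min αstar β < 1 := lt_of_le_of_lt (min_le_right _ _) hβ1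
  have hmβ : min αstar β ≤ β := min_le_right _ _
  -- φ comparison to the maximizer
  have hφle : ∀ x : ℝ, 0 < x → x < 1 → x ≤ β →
      Real.log (1 + c * (x / (1 - x))) / (1 + x / (1 - x)) ≤
        Real.log (1 + c * (min αstar β / (1 - min αstar β))) /
          (1 + min αstar β / (1 - min αstar β)) := by
    intro x hx0 hx1 hxβ
    have hxnn : 0 ≤ x / (1 - x) := div_nonneg hx0.le (by linarith)
    rcases le_total αstar β with hto | hto
    · rw [min_eq_left hto, ← hst_def]
      exact phi_max c st hc hst0 hpsi0 _ hxnn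
    · rw [min_eq_right hto]
      have h1 : x / (1 - x) ≤ β / (1 - β) := hsmono x β hx0 hx1 hβ0 hβ1 hxβ
      have h2 : β / (1 - β) ≤ st := by
        rw [hst_def]; exact hsmono β αstar hβ0 hβ1 hαs0 hαs1 hto
      have hβnn : 0 ≤ β / (1 - β) := div_nonneg hβ0.le (by linarith)
      exact phi_mono c st hc hst0 hpsi0 ⟨hxnn, le_trans h1 h2⟩ ⟨hβnn, h2⟩ h1
  -- min on the left branch
  have hminR : ∀ x : ℝ, 0 < x → x < 1 → x ≤ β →
      min (1 - x * b₁ / (1 - x + x * b₂)) (b₀ * x / (1 - x)) = b₀ * x / (1 - x) := by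
    intro x hx0 hx1 hxβ
    apply min_eq_right
    have h1 : b₀ * x / (1 - x) ≤ b₀ * β / (1 - β) := hHmono x β hx0 hx1 hβ0 hβ1 hxβ
    have h2 : 1 - β * b₁ / (1 - β + β * b₂) ≤ 1 - x * b₁ / (1 - x + x * b₂) :=
      hGanti x β hx0 hx1 hβ0 hβ1 hxβ
    rw [heq] at h2
    exact h1.trans h2
  have hlog2 : (0:ℝ) < Real.log 2 := Real.log_pos one_lt_two
  refine ⟨⟨hm0, hm1⟩, ?_⟩
  intro α hα
  obtain ⟨hα0, hα1⟩ := hα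
  rw [hminR (min αstar β) hm0 hm1 hmβ, hFexpr (min αstar β) hm0 hm1]
  rcases le_total α β with hcase | hcase
  · rw [hminR α hα0 hα1 hcase, hFexpr α hα0 hα1]
    exact div_le_div_of_nonneg_right (hφle α hα0 hα1 hcase) hlog2.le
  · -- decreasing branch
    have hLmin : min (1 - α * b₁ / (1 - α + α * b₂)) (b₀ * α / (1 - α)) =
        1 - α * b₁ / (1 - α + α * b₂) := by
      apply min_eq_left
      have h1 : 1 - α * b₁ / (1 - α + α * b₂) ≤ 1 - β * b₁ / (1 - β + β * b₂) :=
        hGanti β α hβ0 hβ1 hα0 hα1 hcase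
      rw [heq] at h1
      exact h1.trans (hHmono β α hβ0 hβ1 hα0 hα1 hcase)
    rw [hLmin]
    have hgα : 0 < 1 - α * b₁ / (1 - α + α * b₂) := hGpos α hα0 hα1
    have hgβ : 1 - α * b₁ / (1 - α + α * b₂) ≤ 1 - β * b₁ / (1 - β + β * b₂) :=
      hGanti β α hβ0 hβ1 hα0 hα1 hcase
    have harg : (0:ℝ) < 1 + f * (1 - α * b₁ / (1 - α + α * b₂)) := by nlinarith
    calc (1 - α) * Real.logb 2 (1 + f * (1 - α * b₁ / (1 - α + α * b₂)))
        ≤ (1 - β) * Real.logb 2 (1 + f * (1 - β * b₁ / (1 - β + β * b₂))) := by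
          apply mul_le_mul (by linarith)
          · apply Real.logb_le_logb_of_le one_lt_two harg
            nlinarith
          · apply Real.logb_nonneg one_lt_two
            nlinarith
          · linarith
      _ = (1 - β) * Real.logb 2 (1 + f * (b₀ * β / (1 - β))) := by rw [heq]
      _ = Real.log (1 + c * (β / (1 - β))) / (1 + β / (1 - β)) / Real.log 2 :=
          hFexpr β hβ0 hβ1
      _ ≤ _ := div_le_div_of_nonneg_right (hφle β hβ0 hβ1 le_rfl) hlog2.le
end

section
/- Let b₃ > 0, b₄ > 0, b₅ ≥ 0 and η > 0. Then the function α ↦ (1−α)·log₂(1 + b₃/(η·α·b₄/(1−α) + b₅)) is strictly decreasing on the open interval (0,1). (When b₅ = 0 the function is considered on (0,1), where the denominator η·α·b₄/(1−α) is positive.) -/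
/-- For `b₃ > 0`, `b₄ > 0`, `b₅ ≥ 0`, `η > 0`, the function
`α ↦ (1−α)·log₂(1 + b₃/(ηαb₄/(1−α) + b₅))` is strictly decreasing on `(0,1)`. -/
theorem stmt_15 (b₃ b₄ b₅ η : ℝ) (hb₃ : 0 < b₃) (hb₄ : 0 < b₄) (hb₅ : 0 ≤ b₅)
    (hη : 0 < η) :
    StrictAntiOn
      (fun α : ℝ => (1 - α) * Real.logb 2 (1 + b₃ / (η * α * b₄ / (1 - α) + b₅)))
      (Set.Ioo (0 : ℝ) 1) := by
  intro x hx y hy hxy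
  obtain ⟨hx0, hx1⟩ := hx
  obtain ⟨hy0, hy1⟩ := hy
  have h1x : (0:ℝ) < 1 - x := by linarith
  have h1y : (0:ℝ) < 1 - y := by linarith
  have hgx : 0 < η * x * b₄ / (1 - x) + b₅ := by positivity
  have hgy : 0 < η * y * b₄ / (1 - y) + b₅ := by positivity
  have hgxy : η * x * b₄ / (1 - x) + b₅ < η * y * b₄ / (1 - y) + b₅ := by
    have : η * x * b₄ / (1 - x) < η * y * b₄ / (1 - y) := by
      rw [div_lt_div_iff₀ h1x h1y]
      nlinarith [mul_pos (mul_pos hη hb₄) (sub_pos.mpr hxy)]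
    linarith
  have hdiv : b₃ / (η * y * b₄ / (1 - y) + b₅) < b₃ / (η * x * b₄ / (1 - x) + b₅) :=
    div_lt_div_of_pos_left hb₃ hgx hgxy
  have hLy : 0 < Real.logb 2 (1 + b₃ / (η * y * b₄ / (1 - y) + b₅)) := by
    apply Real.logb_pos one_lt_two
    have : 0 < b₃ / (η * y * b₄ / (1 - y) + b₅) := by positivity
    linarith
  have hL : Real.logb 2 (1 + b₃ / (η * y * b₄ / (1 - y) + b₅)) <
      Real.logb 2 (1 + b₃ / (η * x * b₄ / (1 - x) + b₅)) := by
    apply Real.logb_lt_logb one_lt_two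
    · have : 0 < b₃ / (η * y * b₄ / (1 - y) + b₅) := by positivity
      linarith
    · linarith
  exact mul_lt_mul'' (by linarith) hL h1y.le hLy.le
end

section
/- Let m and k be natural numbers with m ≥ 1 and k ≥ 1, and let a > 0, b > 0, z > 0 be reals. Let μ be the Gamma distribution with shape m and rate 1 and let ν be the Gamma distribution with shape k and rate 1. Then the product measure μ ⊗ ν assigns to the set {(u,v) ∈ ℝ × ℝ : min(a·u, b·u·v) < z} the measure 1 − (1/Γ(m)) · ∫_{z/a}^{∞} ( (∫_{z/(b·u)}^{∞} t^{k−1}·e^{−t} dt) / Γ(k) ) · u^{m−1} · e^{−u} du. -/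
open MeasureTheory ProbabilityTheory Set Real

section Aux

lemma tzf_integrableOn (k : ℕ) (hk : 1 ≤ k) {c : ℝ} (hc : 0 < c) :
    IntegrableOn (fun t : ℝ => t ^ (k - 1) * Real.exp (-t)) (Ioi c) := by
  have h0 : IntegrableOn (fun t : ℝ => Real.exp (-t) * t ^ ((k : ℝ) - 1)) (Ioi 0) :=
    Real.GammaIntegral_convergent (by exact_mod_cast hk)
  have h1 := h0.mono_set (Ioi_subset_Ioi hc.le)
  refine h1.congr_fun (fun t ht => ?_) measurableSet_Ioi
  have ht0 : 0 < t := hc.trans ht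
  beta_reduce
  rw [show ((k : ℝ) - 1) = ((k - 1 : ℕ) : ℝ) by push_cast [Nat.cast_sub hk]; ring,
    Real.rpow_natCast, mul_comm]

lemma tzf_gamma_Ici (k : ℕ) (hk : 1 ≤ k) {c : ℝ} (hc : 0 < c) :
    gammaMeasure k 1 (Ici c) =
      ENNReal.ofReal ((∫ t in Ioi c, t ^ (k - 1) * Real.exp (-t)) / Real.Gamma k) := by
  have hΓ : 0 < Real.Gamma k := Real.Gamma_pos_of_pos (by exact_mod_cast hk)
  rw [gammaMeasure, withDensity_apply _ measurableSet_Ici]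
  have heq : ∀ t ∈ Ici c, gammaPDF (k : ℝ) 1 t =
      ENNReal.ofReal ((1 / Real.Gamma k) * (t ^ (k - 1) * Real.exp (-t))) := by
    intro t ht
    have ht0 : 0 < t := hc.trans_le ht
    rw [gammaPDF_of_nonneg ht0.le]
    congr 1
    rw [Real.one_rpow, show ((k : ℝ) - 1) = ((k - 1 : ℕ) : ℝ) by
        push_cast [Nat.cast_sub hk]; ring, Real.rpow_natCast]
    rw [one_mul]
    ring
  rw [setLIntegral_congr_fun measurableSet_Ici heq]
  have hint : IntegrableOn (fun t : ℝ => (1 / Real.Gamma k) * (t ^ (k - 1) * Real.exp (-t)))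
      (Ici c) := by
    rw [integrableOn_Ici_iff_integrableOn_Ioi]
    exact (tzf_integrableOn k hk hc).const_mul _
  rw [← ofReal_integral_eq_lintegral_ofReal hint]
  · rw [integral_Ici_eq_integral_Ioi, integral_const_mul, one_div_mul_eq_div]
  · refine (ae_restrict_iff' measurableSet_Ici).mpr (Filter.Eventually.of_forall fun t ht => ?_)
    have ht0 : 0 < t := hc.trans_le ht
    positivity

end Aux

/-- Exact outage probability of the TZF scheme: for independent
`U ~ Gamma(m,1)` and `V ~ Gamma(k,1)`, the probability that
`min(a·U, b·U·V) < z` equals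
`1 − (1/Γ(m)) ∫_{z/a}^∞ (Γ(k, z/(b·u))/Γ(k)) u^{m−1} e^{−u} du`. -/
theorem stmt_19 (m k : ℕ) (hm : 1 ≤ m) (hk : 1 ≤ k) (a b z : ℝ)
    (ha : 0 < a) (hb : 0 < b) (hz : 0 < z) :
    (gammaMeasure m 1).prod (gammaMeasure k 1)
        {p : ℝ × ℝ | min (a * p.1) (b * p.1 * p.2) < z} =
      ENNReal.ofReal (1 - (1 / Real.Gamma m) *
        ∫ u in Set.Ioi (z / a),
          ((∫ t in Set.Ioi (z / (b * u)), t ^ (k - 1) * Real.exp (-t)) / Real.Gamma k) *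
            u ^ (m - 1) * Real.exp (-u)) := by
  have hm0 : (0 : ℝ) < m := by exact_mod_cast hm
  have hk0 : (0 : ℝ) < k := by exact_mod_cast hk
  have hΓm : 0 < Real.Gamma m := Real.Gamma_pos_of_pos hm0
  have hΓk : 0 < Real.Gamma k := Real.Gamma_pos_of_pos hk0
  haveI : IsProbabilityMeasure (gammaMeasure (m : ℝ) 1) :=
    isProbabilityMeasure_gammaMeasure hm0 one_pos
  haveI : IsProbabilityMeasure (gammaMeasure (k : ℝ) 1) :=
    isProbabilityMeasure_gammaMeasure hk0 one_pos
  set μ := gammaMeasure (m : ℝ) 1 with hμ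
  set ν := gammaMeasure (k : ℝ) 1 with hν
  set S : Set (ℝ × ℝ) := {p : ℝ × ℝ | min (a * p.1) (b * p.1 * p.2) < z} with hSdef
  have hS : MeasurableSet S :=
    measurableSet_lt ((measurable_fst.const_mul a).min
      ((measurable_fst.const_mul b).mul measurable_snd)) measurable_const
  have hza : 0 < z / a := div_pos hz ha
  -- G : the inner tail probability, as a real number
  set G : ℝ → ℝ := fun u => (∫ t in Ioi (z / (b * u)), t ^ (k - 1) * Real.exp (-t)) /
    Real.Gamma k with hGdef
  have hGnn : ∀ u ∈ Ici (z / a), 0 ≤ G u := by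
    intro u hu
    have hu0 : 0 < u := hza.trans_le hu
    have hc : 0 < z / (b * u) := div_pos hz (mul_pos hb hu0)
    refine div_nonneg (setIntegral_nonneg measurableSet_Ioi fun t ht => ?_) hΓk.le
    have ht0 : 0 < t := hc.trans ht
    positivity
  have hGν : ∀ u ∈ Ici (z / a), ν (Ici (z / (b * u))) = ENNReal.ofReal (G u) := by
    intro u hu
    have hu0 : 0 < u := hza.trans_le hu
    exact tzf_gamma_Ici k hk (div_pos hz (mul_pos hb hu0))
  -- measurability of the tail-probability kernel
  have hF : Measurable fun u : ℝ => ν (Ici (z / (b * u))) := by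
    have hmono : Antitone fun c : ℝ => ν (Ici c) := fun c d hcd =>
      measure_mono (Ici_subset_Ici.mpr hcd)
    exact hmono.measurable.comp (measurable_const.div (measurable_const.mul measurable_id))
  -- compute the measure of the complement
  have hcompl : (μ.prod ν) Sᶜ = ∫⁻ u in Ici (z / a), ν (Ici (z / (b * u))) ∂μ := by
    rw [Measure.prod_apply hS.compl, ← lintegral_indicator measurableSet_Ici _]
    refine lintegral_congr fun u => ?_
    by_cases hu : z / a ≤ u
    · have hu0 : 0 < u := hza.trans_le hu
      have hbu : 0 < b * u := mul_pos hb hu0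
      have hset : Prod.mk u ⁻¹' Sᶜ = Ici (z / (b * u)) := by
        ext v
        simp only [Set.mem_preimage, Set.mem_compl_iff, hSdef, Set.mem_setOf_eq, not_lt,
          le_min_iff, Set.mem_Ici]
        constructor
        · rintro ⟨-, h2⟩
          rw [div_le_iff₀ hbu]
          linarith [h2]
        · intro hv
          refine ⟨by rwa [← div_le_iff₀' ha], ?_⟩
          rw [div_le_iff₀ hbu] at hv
          linarith [hv]
      rw [hset]
      exact (Set.indicator_of_mem hu (fun u => ν (Ici (z / (b * u))))).symm
    · have hset : Prod.mk u ⁻¹' Sᶜ = ∅ := by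
        ext v
        simp only [Set.mem_preimage, Set.mem_compl_iff, hSdef, Set.mem_setOf_eq, not_lt,
          le_min_iff, Set.mem_empty_iff_false, iff_false, not_and]
        intro h1
        exact absurd ((div_le_iff₀' ha).mpr h1) hu
      rw [hset, measure_empty]
      exact (Set.indicator_of_notMem hu (fun u => ν (Ici (z / (b * u))))).symm
  -- unfold the density of μ
  have hdens : (∫⁻ u in Ici (z / a), ν (Ici (z / (b * u))) ∂μ) =
      ∫⁻ u in Ici (z / a), ENNReal.ofReal
        (G u * ((1 / Real.Gamma m) * (u ^ (m - 1) * Real.exp (-u)))) := by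
    have hpdfm : Measurable (gammaPDF (m : ℝ) 1) :=
      (measurable_gammaPDFReal (m : ℝ) 1).ennreal_ofReal
    rw [hμ, gammaMeasure, setLIntegral_withDensity_eq_setLIntegral_mul _
      hpdfm hF measurableSet_Ici]
    refine setLIntegral_congr_fun measurableSet_Ici (fun u hu => ?_)
    have hu0 : 0 < u := hza.trans_le hu
    rw [Pi.mul_apply, hGν u hu, gammaPDF_of_nonneg hu0.le]
    rw [Real.one_rpow, show ((m : ℝ) - 1) = ((m - 1 : ℕ) : ℝ) by
        push_cast [Nat.cast_sub hm]; ring, Real.rpow_natCast, one_mul]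
    rw [← ENNReal.ofReal_mul (by positivity)]
    congr 1
    ring
  -- the integrand, expressed with the real integral
  set h : ℝ → ℝ := fun u => G u * ((1 / Real.Gamma m) * (u ^ (m - 1) * Real.exp (-u))) with hhdef
  have hGle : ∀ u ∈ Ici (z / a), G u ≤ 1 := by
    intro u hu
    have := hGν u hu
    have hle : ENNReal.ofReal (G u) ≤ 1 := this ▸ prob_le_one
    exact ENNReal.ofReal_le_one.mp hle
  have hbound : IntegrableOn
      (fun u : ℝ => (1 / Real.Gamma m) * (u ^ (m - 1) * Real.exp (-u))) (Ici (z / a)) := by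
    rw [integrableOn_Ici_iff_integrableOn_Ioi]
    exact (tzf_integrableOn m hm hza).const_mul _
  have hmeas : AEStronglyMeasurable h ((volume : Measure ℝ).restrict (Ici (z / a))) := by
    have hm1 : Measurable fun u : ℝ =>
        (ν (Ici (z / (b * u)))).toReal * ((1 / Real.Gamma m) * (u ^ (m - 1) * Real.exp (-u))) :=
      (hF.ennreal_toReal).mul (((measurable_id.pow_const (m - 1)).mul
        measurable_id.neg.exp).const_mul _)
    refine hm1.aestronglyMeasurable.congr ?_
    refine (ae_restrict_iff' measurableSet_Ici).mpr (Filter.Eventually.of_forall fun u hu => ?_)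
    show (ν (Ici (z / (b * u)))).toReal * (1 / Real.Gamma m * (u ^ (m - 1) * Real.exp (-u))) = h u
    rw [hGν u hu, ENNReal.toReal_ofReal (hGnn u hu)]
  have hInt : IntegrableOn h (Ici (z / a)) := by
    refine Integrable.mono' hbound hmeas ?_
    refine (ae_restrict_iff' measurableSet_Ici).mpr (Filter.Eventually.of_forall fun u hu => ?_)
    have hu0 : 0 < u := hza.trans_le hu
    have hnn : 0 ≤ h u := mul_nonneg (hGnn u hu) (by positivity)
    rw [Real.norm_eq_abs, abs_of_nonneg hnn, hhdef]
    have := hGle u hu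
    nlinarith [hGnn u hu, mul_nonneg (le_of_lt (show (0:ℝ) < 1 / Real.Gamma m by positivity))
      (le_of_lt (show (0:ℝ) < u ^ (m-1) * Real.exp (-u) by positivity))]
  have hofReal : (∫⁻ u in Ici (z / a), ENNReal.ofReal (h u)) =
      ENNReal.ofReal (∫ u in Ici (z / a), h u) := by
    rw [← ofReal_integral_eq_lintegral_ofReal hInt]
    refine (ae_restrict_iff' measurableSet_Ici).mpr (Filter.Eventually.of_forall fun u hu => ?_)
    have hu0 : 0 < u := hza.trans_le hu
    exact mul_nonneg (hGnn u hu) (by positivity)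
  have hIval : (μ.prod ν) Sᶜ = ENNReal.ofReal (∫ u in Ici (z / a), h u) := by
    rw [hcompl, hdens, ← hofReal]
  have hInn : 0 ≤ ∫ u in Ici (z / a), h u := by
    refine setIntegral_nonneg measurableSet_Ici fun u hu => ?_
    have hu0 : 0 < u := hza.trans_le hu
    exact mul_nonneg (hGnn u hu) (by positivity)
  -- identify the real integral with the RHS expression
  have hreInt : (1 / Real.Gamma m) * (∫ u in Set.Ioi (z / a),
      G u * u ^ (m - 1) * Real.exp (-u)) = ∫ u in Ici (z / a), h u := by
    rw [integral_Ici_eq_integral_Ioi, ← integral_const_mul]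
    refine integral_congr_ae (Filter.Eventually.of_forall fun u => ?_)
    simp only [hhdef]
    ring
  -- main complement argument
  have hmain : (μ.prod ν) S = 1 - (μ.prod ν) Sᶜ := by
    have h1 := measure_compl (μ := μ.prod ν) hS.compl (measure_ne_top _ _)
    rw [compl_compl, measure_univ] at h1
    exact h1
  have hnonneg : 0 ≤ (1 / Real.Gamma (m : ℝ)) * ∫ u in Set.Ioi (z / a),
      G u * u ^ (m - 1) * Real.exp (-u) := by
    rw [hreInt]; exact hInn
  rw [hmain, hIval, ← hreInt, ← ENNReal.ofReal_one, ← ENNReal.ofReal_sub _ hnonneg]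
end
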